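/- arXiv:2003.05335 — 4 statements merged into one kernel-verified Lean document; each statement's English description precedes it below -/
import Mathlib

section
/- Let α > 0 and ν > 0, and let 1 ≤ p ≤ ∞. Then the constant C_- = (1/Γ(2α)) ∫₀¹ (1−u)^{2α−1} u^{ν−α−1} F_α(1 − 1/u) du is finite, and for every f ∈ L_{α+ν,p}(ℝ_+) one has ‖L_-^α f‖_{ν,p} ≤ C_- ‖f‖_{α+ν,p}. -/
open MeasureTheory Set
open scoped ENNReal

noncomputable def Fg (a z : ℝ) : ℝ :=
  (Real.Gamma (2*a) / (Real.Gamma a)^2) *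
    ∫ t in (0:ℝ)..1, t^(a-1) * (1-t)^(a-1) * (1 - z*t)^(-a)

noncomputable def Lplus (a : ℝ) (f : ℝ → ℝ) (x : ℝ) : ℝ :=
  (Real.Gamma (2*a))⁻¹ *
    ∫ u in Set.Ioo (0:ℝ) x, (x-u)^(2*a-1) * u^(-a) * Fg a (1 - x/u) * f u

noncomputable def Lminus (a : ℝ) (f : ℝ → ℝ) (x : ℝ) : ℝ :=
  x^(-a) / Real.Gamma (2*a) *
    ∫ u in Set.Ioi x, (u-x)^(2*a-1) * Fg a (1 - u/x) * f u

noncomputable def mulHaar : Measure ℝ :=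
  (volume.restrict (Set.Ioi (0:ℝ))).withDensity fun x => ENNReal.ofReal x⁻¹

noncomputable def nuNorm (ν : ℝ) (p : ℝ≥0∞) (f : ℝ → ℝ) : ℝ≥0∞ :=
  eLpNorm (fun x => x ^ ν * f x) p mulHaar

def memLnu (ν : ℝ) (p : ℝ≥0∞) (f : ℝ → ℝ) : Prop :=
  MemLp (fun x => x ^ ν * f x) p mulHaar

noncomputable def mellinT (f : ℝ → ℝ) (s : ℂ) : ℂ :=
  ∫ x in Set.Ioi (0:ℝ), (f x : ℂ) * (x : ℂ) ^ (s - 1)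

noncomputable def thetaOp (g : ℝ → ℝ) : ℝ → ℝ := fun x => deriv (fun y => y * deriv g y) x

noncomputable def Dplus (a : ℝ) (f : ℝ → ℝ) : ℝ → ℝ :=
  thetaOp^[⌊a⌋₊ + 1] (Lplus ((⌊a⌋₊ : ℝ) + 1 - a) f)

noncomputable def Dminus (a : ℝ) (f : ℝ → ℝ) : ℝ → ℝ :=
  thetaOp^[⌊a⌋₊ + 1] (Lminus ((⌊a⌋₊ : ℝ) + 1 - a) f)

noncomputable def mulHaarI (l : ℝ) : Measure ℝ :=
  (volume.restrict (Set.Ioo (0:ℝ) l)).withDensity fun x => ENNReal.ofReal x⁻¹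

noncomputable def nuNormI (l ν : ℝ) (p : ℝ≥0∞) (f : ℝ → ℝ) : ℝ≥0∞ :=
  eLpNorm (fun x => x ^ ν * f x) p (mulHaarI l)

def memLnuI (l ν : ℝ) (p : ℝ≥0∞) (f : ℝ → ℝ) : Prop :=
  MemLp (fun x => x ^ ν * f x) p (mulHaarI l)

noncomputable def LplusC (a : ℝ) (f : ℝ → ℂ) (x : ℝ) : ℂ :=
  ((Real.Gamma (2*a) : ℂ))⁻¹ *
    ∫ u in Set.Ioo (0:ℝ) x, (((x-u)^(2*a-1) * u^(-a) * Fg a (1 - x/u) : ℝ) : ℂ) * f u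

def memLnuIC (l ν : ℝ) (p : ℝ≥0∞) (f : ℝ → ℂ) : Prop :=
  MemLp (fun x => (x ^ ν : ℝ) • f x) p (mulHaarI l)


namespace Stmt9Aux
open Real
open Real

/-- 1-d change of variables for the Lebesgue integral of `ℝ≥0∞`-valued functions. -/
theorem lintegral_image_deriv {s : Set ℝ} (hs : MeasurableSet s) {f f' : ℝ → ℝ}
    (hf' : ∀ x ∈ s, HasDerivWithinAt f (f' x) s x) (hf : InjOn f s) (g : ℝ → ℝ≥0∞) :
    ∫⁻ x in f '' s, g x = ∫⁻ x in s, ENNReal.ofReal |f' x| * g (f x) := by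
  simpa only [ContinuousLinearMap.det_toSpanSingleton] using
    MeasureTheory.lintegral_image_eq_lintegral_abs_det_fderiv_mul volume hs
      (fun x hx => (hf' x hx).hasFDerivWithinAt) hf g

theorem integrableOn_beta {a b : ℝ} (ha : 0 < a) (hb : 0 < b) :
    IntegrableOn (fun t : ℝ => t ^ (a - 1) * (1 - t) ^ (b - 1)) (Ioo (0 : ℝ) 1) volume := by
  have hmeas : Measurable fun t : ℝ => t ^ (a - 1) * (1 - t) ^ (b - 1) :=
    (measurable_id.pow_const _).mul ((measurable_const.sub measurable_id).pow_const _)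
  have h1 : IntegrableOn (fun t : ℝ => t ^ (a - 1) * (1 - t) ^ (b - 1)) (Ioo (0:ℝ) 2⁻¹) := by
    have hbase : IntegrableOn (fun t : ℝ => t ^ (a - 1)) (Ioo (0:ℝ) 2⁻¹) := by
      have h := intervalIntegral.intervalIntegrable_rpow' (a := (0:ℝ)) (b := 2⁻¹) (r := a - 1) (by linarith)
      rw [intervalIntegrable_iff_integrableOn_Ioo_of_le (by norm_num)] at h
      exact h
    have hC : ∀ t ∈ Ioo (0:ℝ) 2⁻¹,
        ‖t ^ (a - 1) * (1 - t) ^ (b - 1)‖ ≤ max 1 ((2:ℝ) ^ (1 - b)) * t ^ (a - 1) := by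
      intro t ht
      have ht0 : 0 < t := ht.1
      have ht1 : 0 < 1 - t := by have := ht.2; norm_num at this ⊢; linarith
      have hh : (1 - t) ^ (b - 1) ≤ max 1 ((2:ℝ) ^ (1 - b)) := by
        rcases le_total 1 b with hb1 | hb1
        · refine le_max_of_le_left ?_
          exact Real.rpow_le_one ht1.le (by have := ht.1; linarith) (by linarith)
        · refine le_max_of_le_right ?_
          have h2 : (2:ℝ)⁻¹ ≤ 1 - t := by
            have := ht.2; linarith
          have := Real.rpow_le_rpow_of_nonpos (by norm_num : (0:ℝ) < 2⁻¹) h2 (by linarith : b - 1 ≤ 0)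
          calc (1 - t) ^ (b - 1) ≤ ((2:ℝ)⁻¹) ^ (b - 1) := this
            _ = (2:ℝ) ^ (1 - b) := by
                rw [Real.inv_rpow (by norm_num), ← Real.rpow_neg (by norm_num)]
                congr 1; ring
      rw [norm_mul, norm_of_nonneg (Real.rpow_nonneg ht0.le _),
        norm_of_nonneg (Real.rpow_nonneg ht1.le _)]
      calc t ^ (a-1) * (1-t)^(b-1) ≤ t ^ (a-1) * max 1 ((2:ℝ) ^ (1 - b)) :=
            mul_le_mul_of_nonneg_left hh (Real.rpow_nonneg ht0.le _)
        _ = max 1 ((2:ℝ) ^ (1 - b)) * t ^ (a - 1) := by ring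
    exact Integrable.mono' (hbase.const_mul _) hmeas.aestronglyMeasurable.restrict
      ((ae_restrict_mem measurableSet_Ioo).mono hC)
  have h2 : IntegrableOn (fun t : ℝ => t ^ (a - 1) * (1 - t) ^ (b - 1)) (Ioo (2⁻¹:ℝ) 1) := by
    have hbase : IntegrableOn (fun t : ℝ => (1 - t) ^ (b - 1)) (Ioo (2⁻¹:ℝ) 1) := by
      have h := intervalIntegral.intervalIntegrable_rpow' (a := (0:ℝ)) (b := 2⁻¹) (r := b - 1) (by linarith)
      have h' := (h.comp_sub_left 1).symm
      rw [show (1:ℝ) - 2⁻¹ = 2⁻¹ by norm_num, show (1:ℝ) - 0 = 1 by norm_num] at h'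
      rw [intervalIntegrable_iff_integrableOn_Ioo_of_le (by norm_num)] at h'
      exact h'
    have hC : ∀ t ∈ Ioo (2⁻¹:ℝ) 1,
        ‖t ^ (a - 1) * (1 - t) ^ (b - 1)‖ ≤ max 1 ((2:ℝ) ^ (1 - a)) * (1 - t) ^ (b - 1) := by
      intro t ht
      have ht0 : (0:ℝ) < t := lt_trans (by norm_num) ht.1
      have ht1 : 0 < 1 - t := by have := ht.2; linarith
      have hh : t ^ (a - 1) ≤ max 1 ((2:ℝ) ^ (1 - a)) := by
        rcases le_total 1 a with ha1 | ha1
        · exact le_max_of_le_left (Real.rpow_le_one ht0.le ht.2.le (by linarith))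
        · refine le_max_of_le_right ?_
          have := Real.rpow_le_rpow_of_nonpos (by norm_num : (0:ℝ) < 2⁻¹) ht.1.le
            (by linarith : a - 1 ≤ 0)
          calc t ^ (a - 1) ≤ ((2:ℝ)⁻¹) ^ (a - 1) := this
            _ = (2:ℝ) ^ (1 - a) := by
                rw [Real.inv_rpow (by norm_num), ← Real.rpow_neg (by norm_num)]
                congr 1; ring
      rw [norm_mul, norm_of_nonneg (Real.rpow_nonneg ht0.le _),
        norm_of_nonneg (Real.rpow_nonneg ht1.le _)]
      exact mul_le_mul_of_nonneg_right hh (Real.rpow_nonneg ht1.le _)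
    exact Integrable.mono' (hbase.const_mul _) hmeas.aestronglyMeasurable.restrict
      ((ae_restrict_mem measurableSet_Ioo).mono hC)
  have hsub : Ioo (0:ℝ) 1 ⊆ Ioo (0:ℝ) 2⁻¹ ∪ Ico (2⁻¹:ℝ) 1 := by
    intro t ht
    rcases lt_or_ge t 2⁻¹ with h | h
    · exact Or.inl ⟨ht.1, h⟩
    · exact Or.inr ⟨h, ht.2⟩
  refine IntegrableOn.mono_set ?_ hsub
  refine h1.union ?_
  rwa [IntegrableOn, ← Measure.restrict_congr_set Ioo_ae_eq_Ico]

theorem Fg_eq (a z : ℝ) :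
    Fg a z = (Real.Gamma (2*a) / (Real.Gamma a)^2) *
      ∫ t in Ioo (0:ℝ) 1, t^(a-1) * (1-t)^(a-1) * (1 - z*t)^(-a) := by
  rw [Fg, intervalIntegral.integral_of_le zero_le_one,
    MeasureTheory.integral_Ioc_eq_integral_Ioo]

theorem cg_nonneg {a : ℝ} (ha : 0 < a) : 0 ≤ Real.Gamma (2*a) / (Real.Gamma a)^2 :=
  div_nonneg (Real.Gamma_pos_of_pos (by linarith)).le (sq_nonneg _)

theorem Fg_nonneg {a z : ℝ} (ha : 0 < a) (hz : z ≤ 0) : 0 ≤ Fg a z := by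
  rw [Fg_eq]
  refine mul_nonneg (cg_nonneg ha) ?_
  refine setIntegral_nonneg measurableSet_Ioo fun t ht => ?_
  have h1 : (0:ℝ) ≤ 1 - z * t := by nlinarith [ht.1.le]
  exact mul_nonneg (mul_nonneg (Real.rpow_nonneg ht.1.le _)
    (Real.rpow_nonneg (by linarith [ht.2] : (0:ℝ) ≤ 1 - t) _)) (Real.rpow_nonneg h1 _)

theorem integrand_le {a ε z t : ℝ} (ha : 0 < a) (hε0 : 0 < ε) (hεa : ε < a) (hz : z ≤ 0)
    (ht0 : 0 < t) (ht1 : t < 1) :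
    t^(a-1) * (1-t)^(a-1) * (1 - z*t)^(-a) ≤ t^(ε-1) * (1-t)^(a-ε-1) * (1-z)^(ε-a) := by
  have h1t : 0 < 1 - t := by linarith
  have h1z : 0 < 1 - z := by linarith
  set θ := ε / a with hθ
  have hθ0 : 0 < θ := div_pos hε0 ha
  have hθ1 : θ < 1 := (div_lt_one ha).2 hεa
  have hB : 0 < t * (1 - z) := mul_pos ht0 h1z
  have hgm : (1-t)^θ * (t*(1-z))^(1-θ) ≤ 1 - z*t := by
    have e : 1 - z*t = (1-t) + t*(1-z) := by ring
    have h1 : (1-t)^θ ≤ ((1-t) + t*(1-z))^θ :=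
      Real.rpow_le_rpow h1t.le (by linarith) hθ0.le
    have h2 : (t*(1-z))^(1-θ) ≤ ((1-t) + t*(1-z))^(1-θ) :=
      Real.rpow_le_rpow hB.le (by linarith) (by linarith)
    calc (1-t)^θ * (t*(1-z))^(1-θ)
        ≤ ((1-t) + t*(1-z))^θ * ((1-t) + t*(1-z))^(1-θ) :=
          mul_le_mul h1 h2 (Real.rpow_nonneg hB.le _) (Real.rpow_nonneg (by linarith) _)
      _ = ((1-t) + t*(1-z))^(1:ℝ) := by
          rw [← Real.rpow_add (by linarith)]; norm_num
      _ = 1 - z*t := by rw [Real.rpow_one]; ring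
  have hgm0 : 0 < (1-t)^θ * (t*(1-z))^(1-θ) :=
    mul_pos (Real.rpow_pos_of_pos h1t _) (Real.rpow_pos_of_pos hB _)
  have eθ1 : θ * (-a) = -ε := by rw [hθ]; field_simp
  have eθ2 : (1 - θ) * (-a) = ε - a := by rw [hθ]; field_simp [ha.ne']; try ring
  have hmain : (1 - z*t)^(-a) ≤ (1-t)^(-ε) * (t^(ε-a) * (1-z)^(ε-a)) := by
    calc (1 - z*t)^(-a) ≤ ((1-t)^θ * (t*(1-z))^(1-θ))^(-a) :=
          Real.rpow_le_rpow_of_nonpos hgm0 hgm (neg_nonpos.2 ha.le)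
      _ = (1-t)^(-ε) * (t^(ε-a) * (1-z)^(ε-a)) := by
          rw [Real.mul_rpow (Real.rpow_nonneg h1t.le _) (Real.rpow_nonneg hB.le _),
            ← Real.rpow_mul h1t.le, ← Real.rpow_mul hB.le, eθ1, eθ2,
            Real.mul_rpow ht0.le h1z.le]
  calc t^(a-1) * (1-t)^(a-1) * (1 - z*t)^(-a)
      ≤ t^(a-1) * (1-t)^(a-1) * ((1-t)^(-ε) * (t^(ε-a) * (1-z)^(ε-a))) :=
        mul_le_mul_of_nonneg_left hmain
          (mul_nonneg (Real.rpow_nonneg ht0.le _) (Real.rpow_nonneg h1t.le _))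
    _ = (t^(a-1) * t^(ε-a)) * ((1-t)^(a-1) * (1-t)^(-ε)) * (1-z)^(ε-a) := by ring
    _ = t^(ε-1) * (1-t)^(a-ε-1) * (1-z)^(ε-a) := by
        rw [← Real.rpow_add ht0, ← Real.rpow_add h1t,
          show a - 1 + (ε - a) = ε - 1 by ring, show a - 1 + -ε = a - ε - 1 by ring]

theorem Fg_integrand_int {a z : ℝ} (ha : 0 < a) (hz : z ≤ 0) :
    IntegrableOn (fun t : ℝ => t^(a-1) * (1-t)^(a-1) * (1 - z*t)^(-a)) (Ioo (0:ℝ) 1) := by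
  refine Integrable.mono' (integrableOn_beta ha ha) ?_ ?_
  · exact (((measurable_id.pow_const _).mul
      ((measurable_const.sub measurable_id).pow_const _)).mul
      ((measurable_const.sub (measurable_id.const_mul z)).pow_const _)).aestronglyMeasurable.restrict
  · filter_upwards [ae_restrict_mem measurableSet_Ioo] with t ht
    have h1t : (0:ℝ) ≤ 1 - t := by linarith [ht.2]
    have h1zt : 1 ≤ 1 - z*t := by nlinarith [ht.1.le]
    rw [norm_mul, norm_mul, norm_of_nonneg (Real.rpow_nonneg ht.1.le _),
      norm_of_nonneg (Real.rpow_nonneg h1t _),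
      norm_of_nonneg (Real.rpow_nonneg (by linarith : (0:ℝ) ≤ 1 - z*t) _)]
    calc t^(a-1) * (1-t)^(a-1) * (1-z*t)^(-a)
        ≤ t^(a-1) * (1-t)^(a-1) * 1 :=
          mul_le_mul_of_nonneg_left
            (Real.rpow_le_one_of_one_le_of_nonpos h1zt (neg_nonpos.2 ha.le))
            (mul_nonneg (Real.rpow_nonneg ht.1.le _) (Real.rpow_nonneg h1t _))
      _ = t^(a-1) * (1-t)^(a-1) := mul_one _

theorem Fg_le {a ε : ℝ} (ha : 0 < a) (hε0 : 0 < ε) (hεa : ε < a) {z : ℝ} (hz : z ≤ 0) :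
    Fg a z ≤ (Real.Gamma (2*a) / (Real.Gamma a)^2) *
      (∫ t in Ioo (0:ℝ) 1, t^(ε-1) * (1-t)^(a-ε-1)) * (1-z)^(ε-a) := by
  rw [Fg_eq, mul_assoc]
  refine mul_le_mul_of_nonneg_left ?_ (cg_nonneg ha)
  rw [← integral_mul_const]
  refine setIntegral_mono_on (Fg_integrand_int ha hz)
    ((integrableOn_beta hε0 (by linarith : 0 < a - ε)).mul_const _) measurableSet_Ioo ?_
  intro t ht
  exact integrand_le ha hε0 hεa hz ht.1 ht.2

theorem Fg_continuousAt {a : ℝ} (ha : 0 < a) {z₀ : ℝ} (hz : z₀ < 0) :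
    ContinuousAt (Fg a) z₀ := by
  have hFg : Fg a = fun z => (Real.Gamma (2*a) / (Real.Gamma a)^2) *
      ∫ t in Ioo (0:ℝ) 1, t^(a-1) * (1-t)^(a-1) * (1 - z*t)^(-a) := funext (Fg_eq a)
  rw [hFg]
  refine continuousAt_const.mul ?_
  refine MeasureTheory.continuousAt_of_dominated
    (bound := fun t => t^(a-1) * (1-t)^(a-1)) ?_ ?_ (integrableOn_beta ha ha) ?_
  · refine Filter.Eventually.of_forall fun z => ?_
    exact (((measurable_id.pow_const _).mul
      ((measurable_const.sub measurable_id).pow_const _)).mul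
      ((measurable_const.sub (measurable_id.const_mul z)).pow_const _)).aestronglyMeasurable.restrict
  · filter_upwards [isOpen_Iio.mem_nhds (show z₀ ∈ Iio (0:ℝ) from hz)] with z hzlt
    filter_upwards [ae_restrict_mem measurableSet_Ioo] with t ht
    have h1t : (0:ℝ) ≤ 1 - t := by linarith [ht.2]
    have h1zt : 1 ≤ 1 - z*t := by nlinarith [ht.1.le, (mem_Iio.mp hzlt).le]
    rw [norm_mul, norm_mul, norm_of_nonneg (Real.rpow_nonneg ht.1.le _),
      norm_of_nonneg (Real.rpow_nonneg h1t _),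
      norm_of_nonneg (Real.rpow_nonneg (by linarith : (0:ℝ) ≤ 1 - z*t) _)]
    calc t^(a-1) * (1-t)^(a-1) * (1-z*t)^(-a)
        ≤ t^(a-1) * (1-t)^(a-1) * 1 :=
          mul_le_mul_of_nonneg_left
            (Real.rpow_le_one_of_one_le_of_nonpos h1zt (neg_nonpos.2 ha.le))
            (mul_nonneg (Real.rpow_nonneg ht.1.le _) (Real.rpow_nonneg h1t _))
      _ = t^(a-1) * (1-t)^(a-1) := mul_one _
  · filter_upwards [ae_restrict_mem measurableSet_Ioo] with t ht
    have h0 : 1 - z₀ * t ≠ 0 := by nlinarith [ht.1, ht.2]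
    exact continuousAt_const.mul
      (ContinuousAt.rpow_const
        (continuousAt_const.sub (continuousAt_id.mul continuousAt_const)) (Or.inl h0))

theorem kernel_contOn {α ν : ℝ} (hα : 0 < α) :
    ContinuousOn (fun u : ℝ => (1-u)^(2*α-1) * u^(ν-α-1) * Fg α (1-1/u)) (Ioo 0 1) := by
  refine continuousOn_of_forall_continuousAt fun u hu => ?_
  have hu0 := hu.1
  have hu1 := hu.2
  have h1u : 0 < 1 - u := by linarith
  refine ContinuousAt.mul (ContinuousAt.mul ?_ ?_) ?_
  · exact ContinuousAt.rpow_const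
      (continuousAt_const.sub continuousAt_id) (Or.inl h1u.ne')
  · exact ContinuousAt.rpow_const continuousAt_id (Or.inl hu0.ne')
  · have hz : 1 - 1/u < 0 := by
      have h : 1 < 1/u := by rw [lt_div_iff₀ hu0]; linarith
      linarith
    have hin : ContinuousAt (fun u : ℝ => 1 - 1/u) u :=
      continuousAt_const.sub (continuousAt_const.div continuousAt_id hu0.ne')
    exact ContinuousAt.comp (x := u) (g := Fg α)
      (f := fun u : ℝ => 1 - 1/u) (Fg_continuousAt hα hz) hin

theorem kernel_integrableOn {α ν : ℝ} (hα : 0 < α) (hν : 0 < ν) :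
    IntegrableOn (fun u : ℝ => (1-u)^(2*α-1) * u^(ν-α-1) * Fg α (1-1/u)) (Ioo 0 1) volume := by
  set ε := min ν α / 2 with hε
  have hmin : 0 < min ν α := lt_min hν hα
  have hε0 : 0 < ε := by rw [hε]; positivity
  have hεα : ε < α := by
    have h1 : min ν α ≤ α := min_le_right _ _
    rw [hε]; linarith
  have hεν : ε < ν := by
    have h1 : min ν α ≤ ν := min_le_left _ _
    rw [hε]; linarith
  set D := (Real.Gamma (2*α) / (Real.Gamma α)^2) *
      (∫ t in Ioo (0:ℝ) 1, t^(ε-1) * (1-t)^(α-ε-1)) with hD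
  have hbd : ∀ u ∈ Ioo (0:ℝ) 1, ‖(1-u)^(2*α-1) * u^(ν-α-1) * Fg α (1-1/u)‖ ≤
      D * (u^(ν-ε-1) * (1-u)^(2*α-1)) := by
    intro u hu
    have hu0 := hu.1
    have hu1 := hu.2
    have h1u : 0 < 1 - u := by linarith
    have hz : 1 - 1/u ≤ 0 := by
      have h : 1 < 1/u := by rw [lt_div_iff₀ hu0]; linarith
      linarith
    have hFg := Fg_le hα hε0 hεα hz
    have h1z : (1 : ℝ) - (1 - 1/u) = 1/u := by ring
    rw [h1z] at hFg
    have h1u' : (1/u : ℝ)^(ε-α) = u^(α-ε) := by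
      rw [one_div, Real.inv_rpow hu0.le, ← Real.rpow_neg hu0.le,
        show -(ε-α) = α - ε by ring]
    rw [h1u'] at hFg
    have hFg0 : 0 ≤ Fg α (1-1/u) := Fg_nonneg hα hz
    rw [norm_mul, norm_mul, norm_of_nonneg (Real.rpow_nonneg h1u.le _),
      norm_of_nonneg (Real.rpow_nonneg hu0.le _), norm_of_nonneg hFg0]
    calc (1-u)^(2*α-1) * u^(ν-α-1) * Fg α (1-1/u)
        ≤ (1-u)^(2*α-1) * u^(ν-α-1) * (D * u^(α-ε)) :=
          mul_le_mul_of_nonneg_left hFg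
            (mul_nonneg (Real.rpow_nonneg h1u.le _) (Real.rpow_nonneg hu0.le _))
      _ = D * ((u^(ν-α-1) * u^(α-ε)) * (1-u)^(2*α-1)) := by ring
      _ = D * (u^(ν-ε-1) * (1-u)^(2*α-1)) := by
          rw [← Real.rpow_add hu0, show ν-α-1 + (α-ε) = ν-ε-1 by ring]
  have hint : IntegrableOn (fun u : ℝ => D * (u^(ν-ε-1) * (1-u)^(2*α-1))) (Ioo 0 1) := by
    have := integrableOn_beta (show (0:ℝ) < ν - ε by linarith) (show (0:ℝ) < 2*α by linarith)
    rw [show ν - ε - 1 = ν - ε - 1 by ring] at this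
    exact (by simpa [show (2*α) - 1 = 2*α-1 by ring, show (ν-ε) - 1 = ν-ε-1 by ring]
      using this.const_mul D : _)
  exact Integrable.mono' hint
    ((kernel_contOn hα).aestronglyMeasurable measurableSet_Ioo)
    ((ae_restrict_mem measurableSet_Ioo).mono hbd)
theorem lintegral_mulHaar (φ : ℝ → ℝ≥0∞) (hφ : Measurable φ) :
    ∫⁻ x, φ x ∂mulHaar = ∫⁻ x in Ioi (0:ℝ), ENNReal.ofReal x⁻¹ * φ x := by
  rw [mulHaar, lintegral_withDensity_eq_lintegral_mul _ measurable_inv.ennreal_ofReal hφ]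
  rfl

theorem dil_invariance {c : ℝ} (hc : 0 < c) (φ : ℝ → ℝ≥0∞) (hφ : Measurable φ) :
    ∫⁻ x, φ (x / c) ∂mulHaar = ∫⁻ x, φ x ∂mulHaar := by
  rw [lintegral_mulHaar (fun x => φ (x / c)) (hφ.comp (measurable_id.div_const c)),
    lintegral_mulHaar φ hφ]
  have himg : (fun y : ℝ => c * y) '' Ioi (0:ℝ) = Ioi (0:ℝ) := by
    ext x
    constructor
    · rintro ⟨y, hy, rfl⟩; exact mul_pos hc hy
    · intro hx; exact ⟨x / c, div_pos hx hc, by field_simp⟩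
  have hderiv : ∀ y ∈ Ioi (0:ℝ), HasDerivWithinAt (fun y : ℝ => c * y) c (Ioi 0) y := by
    intro y _
    simpa using ((hasDerivAt_id y).const_mul c).hasDerivWithinAt (s := Ioi (0:ℝ))
  have hinj : InjOn (fun y : ℝ => c * y) (Ioi 0) := fun y1 _ y2 _ h =>
    mul_left_cancel₀ hc.ne' h
  calc ∫⁻ x in Ioi (0:ℝ), ENNReal.ofReal x⁻¹ * φ (x / c)
      = ∫⁻ x in (fun y : ℝ => c * y) '' Ioi 0, ENNReal.ofReal x⁻¹ * φ (x / c) := by rw [himg]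
    _ = ∫⁻ y in Ioi (0:ℝ), ENNReal.ofReal |c| *
          (ENNReal.ofReal (c * y)⁻¹ * φ ((c * y) / c)) :=
        lintegral_image_deriv measurableSet_Ioi (fun y hy => hderiv y hy) hinj _
    _ = ∫⁻ y in Ioi (0:ℝ), ENNReal.ofReal y⁻¹ * φ y := by
        refine setLIntegral_congr_fun measurableSet_Ioi
          (fun y hy => ?_)
        rw [abs_of_pos hc, mul_div_cancel_left₀ _ hc.ne', ← mul_assoc,
          ← ENNReal.ofReal_mul hc.le]
        congr 2
        rw [mul_inv, ← mul_assoc, mul_inv_cancel₀ hc.ne', one_mul]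

theorem key_id {x t α ν : ℝ} (hx : 0 < x) (ht0 : 0 < t) (ht1 : t < 1) :
    x^ν * x^(-α) * (x / t^2 * (x/t - x)^(2*α-1)) =
      (1-t)^(2*α-1) * t^(ν-α-1) * (x/t)^(α+ν) := by
  have h1t : 0 < 1 - t := by linarith
  have hxt : x/t - x = x * (1-t) / t := by field_simp
  rw [hxt]
  have hpos1 : 0 < x^ν * x^(-α) * (x / t^2 * (x * (1-t) / t)^(2*α-1)) := by positivity
  have hpos2 : 0 < (1-t)^(2*α-1) * t^(ν-α-1) * (x/t)^(α+ν) := by positivity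
  refine Real.log_injOn_pos (mem_Ioi.mpr hpos1) (mem_Ioi.mpr hpos2) ?_
  simp (disch := positivity) only [Real.log_mul, Real.log_div, Real.log_rpow, Real.log_pow]
  ring

theorem step1 {α ν : ℝ} (hα : 0 < α) (f₀ : ℝ → ℝ) {x : ℝ} (hx : 0 < x) :
    (‖x ^ ν * Lminus α f₀ x‖₊ : ℝ≥0∞) ≤
      ENNReal.ofReal (Real.Gamma (2*α))⁻¹ *
        ∫⁻ t in Ioo (0:ℝ) 1,
          ENNReal.ofReal ((1-t)^(2*α-1) * t^(ν-α-1) * Fg α (1-1/t)) *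
            ENNReal.ofReal |(x/t) ^ (α+ν) * f₀ (x/t)| := by
  have hΓ : 0 < Real.Gamma (2*α) := Real.Gamma_pos_of_pos (by linarith)
  have hc : 0 ≤ (Real.Gamma (2*α))⁻¹ * (x^ν * x^(-α)) := by positivity
  have hsplit : x ^ ν * Lminus α f₀ x =
      ((Real.Gamma (2*α))⁻¹ * (x^ν * x^(-α))) *
        ∫ u in Ioi x, (u-x)^(2*α-1) * Fg α (1 - u/x) * f₀ u := by
    rw [Lminus]; ring
  have himg : (fun t : ℝ => x / t) '' Ioo 0 1 = Ioi x := by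
    ext u
    constructor
    · rintro ⟨t, ht, rfl⟩
      have : x < x / t := by
        rw [lt_div_iff₀ ht.1]; nlinarith [ht.2]
      exact this
    · intro hu
      have hu' : x < u := hu
      have hxu : 0 < u := lt_trans hx hu'
      refine ⟨x / u, ⟨div_pos hx hxu, (div_lt_one hxu).2 hu'⟩, ?_⟩
      field_simp
  have hderiv : ∀ t ∈ Ioo (0:ℝ) 1,
      HasDerivWithinAt (fun t : ℝ => x / t) (x * -((t^2)⁻¹)) (Ioo 0 1) t := by
    intro t ht
    have h := ((hasDerivAt_inv ht.1.ne').const_mul x).hasDerivWithinAt (s := Ioo (0:ℝ) 1)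
    have hfe : (fun t : ℝ => x / t) = fun t : ℝ => x * t⁻¹ :=
      funext fun t => div_eq_mul_inv x t
    rw [hfe]
    exact h
  have hinj : InjOn (fun t : ℝ => x / t) (Ioo 0 1) := by
    intro t1 h1 t2 h2 h
    have h' : x * t2 = x * t1 := by
      rw [div_eq_div_iff h1.1.ne' h2.1.ne'] at h
      exact h
    exact (mul_left_cancel₀ hx.ne' h').symm
  rw [hsplit]
  calc (‖((Real.Gamma (2*α))⁻¹ * (x^ν * x^(-α))) *
          ∫ u in Ioi x, (u-x)^(2*α-1) * Fg α (1 - u/x) * f₀ u‖₊ : ℝ≥0∞)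
      = ENNReal.ofReal (Real.Gamma (2*α))⁻¹ * (ENNReal.ofReal (x^ν * x^(-α)) *
          (‖∫ u in Ioi x, (u-x)^(2*α-1) * Fg α (1 - u/x) * f₀ u‖₊ : ℝ≥0∞)) := by
        rw [nnnorm_mul, ENNReal.coe_mul, ← enorm_eq_nnnorm, Real.enorm_eq_ofReal hc,
          ENNReal.ofReal_mul (by positivity), mul_assoc]
    _ ≤ ENNReal.ofReal (Real.Gamma (2*α))⁻¹ * (ENNReal.ofReal (x^ν * x^(-α)) *
          ∫⁻ u in Ioi x, (‖(u-x)^(2*α-1) * Fg α (1 - u/x) * f₀ u‖₊ : ℝ≥0∞)) :=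
        mul_le_mul_right (mul_le_mul_right (enorm_integral_le_lintegral_enorm _) _) _
    _ = ENNReal.ofReal (Real.Gamma (2*α))⁻¹ *
        ∫⁻ t in Ioo (0:ℝ) 1,
          ENNReal.ofReal ((1-t)^(2*α-1) * t^(ν-α-1) * Fg α (1-1/t)) *
            ENNReal.ofReal |(x/t) ^ (α+ν) * f₀ (x/t)| := by
        congr 1
        rw [← himg, lintegral_image_deriv measurableSet_Ioo hderiv hinj,
          ← lintegral_const_mul' _ _ ENNReal.ofReal_ne_top]
        refine setLIntegral_congr_fun measurableSet_Ioo
          (fun t ht => ?_)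
        have ht0 := ht.1
        have ht1 := ht.2
        have h1t : 0 < 1 - t := by linarith
        have hxt : 0 < x / t := div_pos hx ht0
        have hsub : 0 < x/t - x := by
          have : x < x / t := by rw [lt_div_iff₀ ht0]; nlinarith
          linarith
        have hdd : 1 - (x/t)/x = 1 - 1/t := by
          rw [div_div, mul_comm, ← div_div, div_self hx.ne']
        have hz : 1 - 1/t ≤ 0 := by
          have h : 1 < 1/t := by rw [lt_div_iff₀ ht0]; linarith
          linarith
        have hFg0 : 0 ≤ Fg α (1 - 1/t) := Fg_nonneg hα hz
        have e1 : |x * -((t^2)⁻¹)| = x / t^2 := by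
          rw [abs_mul, abs_of_pos hx, abs_neg,
            abs_of_pos (by positivity : (0:ℝ) < ((t^2)⁻¹ : ℝ)), div_eq_mul_inv]
        have e2 : |(x/t - x)^(2*α-1) * Fg α (1-1/t) * f₀ (x/t)| =
            (x/t - x)^(2*α-1) * Fg α (1-1/t) * |f₀ (x/t)| := by
          rw [abs_mul, abs_mul, abs_of_nonneg (Real.rpow_nonneg hsub.le _),
            abs_of_nonneg hFg0]
        have e3 : |(x/t) ^ (α+ν) * f₀ (x/t)| = (x/t)^(α+ν) * |f₀ (x/t)| := by
          rw [abs_mul, abs_of_nonneg (Real.rpow_nonneg hxt.le _)]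
        rw [hdd, ← enorm_eq_nnnorm, Real.enorm_eq_ofReal_abs, e1, e2, e3]
        have hker : (0:ℝ) ≤ (1-t)^(2*α-1) * t^(ν-α-1) * Fg α (1-1/t) :=
          mul_nonneg (mul_nonneg (Real.rpow_nonneg h1t.le _)
            (Real.rpow_nonneg ht0.le _)) hFg0
        rw [← ENNReal.ofReal_mul (by positivity : (0:ℝ) ≤ x / t^2),
          ← ENNReal.ofReal_mul (by positivity : (0:ℝ) ≤ x^ν * x^(-α)),
          ← ENNReal.ofReal_mul hker]
        congr 1
        have hkey := key_id (α := α) (ν := ν) hx ht0 ht1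
        linear_combination (Fg α (1-1/t) * |f₀ (x/t)|) * hkey
instance : SFinite mulHaar := by
  unfold mulHaar; infer_instance

theorem swap_core (km W : ℝ → ℝ≥0∞) (hkm : Measurable km) (hW : Measurable W) :
    ∫⁻ x, (∫⁻ t in Ioo (0:ℝ) 1, km t * W (x / t)) ∂mulHaar
      = (∫⁻ t in Ioo (0:ℝ) 1, km t) * ∫⁻ y, W y ∂mulHaar := by
  have hmeas : AEMeasurable (Function.uncurry fun (x t : ℝ) => km t * W (x / t))
      (mulHaar.prod (volume.restrict (Ioo (0:ℝ) 1))) :=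
    ((hkm.comp measurable_snd).mul
      (hW.comp (measurable_fst.div measurable_snd))).aemeasurable
  rw [lintegral_lintegral_swap hmeas]
  calc ∫⁻ t in Ioo (0:ℝ) 1, ∫⁻ x, km t * W (x/t) ∂mulHaar
      = ∫⁻ t in Ioo (0:ℝ) 1, km t * ∫⁻ y, W y ∂mulHaar := by
        refine setLIntegral_congr_fun measurableSet_Ioo
          (fun t ht => ?_)
        rw [lintegral_const_mul (km t)
            (show Measurable fun x : ℝ => W (x/t) from hW.comp (measurable_id.div_const t)),
          dil_invariance ht.1 W hW]
    _ = (∫⁻ t in Ioo (0:ℝ) 1, km t) * ∫⁻ y, W y ∂mulHaar :=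
        lintegral_mul_const _ hkm

theorem young_finite {r : ℝ} (hr : 1 ≤ r) (km W : ℝ → ℝ≥0∞) (hkm : Measurable km)
    (hW : Measurable W) :
    ∫⁻ x, (∫⁻ t in Ioo (0:ℝ) 1, km t * W (x / t)) ^ r ∂mulHaar ≤
      (∫⁻ t in Ioo (0:ℝ) 1, km t) ^ r * ∫⁻ y, (W y) ^ r ∂mulHaar := by
  set CK := ∫⁻ t in Ioo (0:ℝ) 1, km t with hCK
  rcases eq_or_lt_of_le hr with h1 | h1
  · rw [← h1]
    simp only [ENNReal.rpow_one]
    exact le_of_eq (swap_core km W hkm hW)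
  · have hr0 : (0:ℝ) < r := by linarith
    have hconj : r.HolderConjugate (r/(r-1)) := Real.HolderConjugate.conjExponent h1
    set q := r/(r-1) with hq
    have hq0 : 0 < q := hconj.symm.pos
    have hiq : 1/q + 1/r = 1 := by
      have h := hconj.inv_add_inv_eq_one
      rw [one_div, one_div]
      linarith [h]
    have hqr : r/q + 1 = r := by
      have hr1 : r - 1 ≠ 0 := by intro h; rw [sub_eq_zero] at h; exact h1.ne' h
      rw [hq, div_div_eq_mul_div, mul_comm, mul_div_assoc, div_self hr0.ne', mul_one]
      ring
    have hWx : ∀ x : ℝ, Measurable fun t : ℝ => W (x / t) := fun x =>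
      hW.comp (measurable_const.div measurable_id)
    have hpt : ∀ x : ℝ, (∫⁻ t in Ioo (0:ℝ) 1, km t * W (x/t)) ≤
        CK ^ (1/q) * (∫⁻ t in Ioo (0:ℝ) 1, km t * (W (x/t)) ^ r) ^ (1/r) := by
      intro x
      have heq : ∀ t : ℝ, km t * W (x/t) =
          ((fun t => km t ^ (1/q)) * fun t => km t ^ (1/r) * W (x/t)) t := by
        intro t
        simp only [Pi.mul_apply]
        rw [← mul_assoc, ← ENNReal.rpow_add_of_nonneg _ _
          (by positivity) (by positivity), hiq, ENNReal.rpow_one]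
      calc ∫⁻ t in Ioo (0:ℝ) 1, km t * W (x/t)
          = ∫⁻ t in Ioo (0:ℝ) 1,
              ((fun t => km t ^ (1/q)) * fun t => km t ^ (1/r) * W (x/t)) t :=
            lintegral_congr heq
        _ ≤ (∫⁻ t in Ioo (0:ℝ) 1, (km t ^ (1/q)) ^ q) ^ (1/q) *
            (∫⁻ t in Ioo (0:ℝ) 1, (km t ^ (1/r) * W (x/t)) ^ r) ^ (1/r) :=
            ENNReal.lintegral_mul_le_Lp_mul_Lq _ hconj.symm
              (hkm.pow_const _).aemeasurable
              (((hkm.pow_const _).mul (hWx x)).aemeasurable)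
        _ = CK ^ (1/q) * (∫⁻ t in Ioo (0:ℝ) 1, km t * (W (x/t)) ^ r) ^ (1/r) := by
            congr 2
            · refine lintegral_congr fun t => ?_
              rw [← ENNReal.rpow_mul, one_div_mul_cancel hq0.ne', ENNReal.rpow_one]
            · refine lintegral_congr fun t => ?_
              rw [ENNReal.mul_rpow_of_nonneg _ _ hr0.le, ← ENNReal.rpow_mul,
                one_div_mul_cancel hr0.ne', ENNReal.rpow_one]
    have hmeasx : Measurable fun x : ℝ => ∫⁻ t in Ioo (0:ℝ) 1, km t * (W (x/t)) ^ r := by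
      refine Measurable.lintegral_prod_right ?_
      exact ((hkm.comp measurable_snd).mul
        ((hW.comp (measurable_fst.div measurable_snd)).pow_const _))
    calc ∫⁻ x, (∫⁻ t in Ioo (0:ℝ) 1, km t * W (x/t)) ^ r ∂mulHaar
        ≤ ∫⁻ x, (CK ^ (1/q) * (∫⁻ t in Ioo (0:ℝ) 1, km t * (W (x/t)) ^ r) ^ (1/r)) ^ r
            ∂mulHaar :=
          lintegral_mono fun x => ENNReal.rpow_le_rpow (hpt x) hr0.le
      _ = ∫⁻ x, CK ^ (r/q) * (∫⁻ t in Ioo (0:ℝ) 1, km t * (W (x/t)) ^ r) ∂mulHaar := by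
          refine lintegral_congr fun x => ?_
          rw [ENNReal.mul_rpow_of_nonneg _ _ hr0.le, ← ENNReal.rpow_mul,
            ← ENNReal.rpow_mul, one_div_mul_cancel hr0.ne', ENNReal.rpow_one,
            show 1/q * r = r/q by ring]
      _ = CK ^ (r/q) * (CK * ∫⁻ y, (W y) ^ r ∂mulHaar) := by
          rw [lintegral_const_mul _ hmeasx]
          congr 1
          have hsc := swap_core km (fun y => W y ^ r) hkm (hW.pow_const _)
          simpa using hsc
      _ = CK ^ r * ∫⁻ y, (W y) ^ r ∂mulHaar := by
          rw [← mul_assoc]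
          congr 1
          rw [show CK ^ (r/q) * CK = CK ^ (r/q) * CK ^ (1:ℝ) by rw [ENNReal.rpow_one],
            ← ENNReal.rpow_add_of_nonneg _ _ (by positivity) zero_le_one, hqr]

theorem young_top (km W : ℝ → ℝ≥0∞) (hkm : Measurable km) (hW : Measurable W)
    {M : ℝ≥0∞} (hM : ∀ᵐ y ∂mulHaar, W y ≤ M) :
    ∀ᵐ x ∂mulHaar, (∫⁻ t in Ioo (0:ℝ) 1, km t * W (x/t)) ≤
      (∫⁻ t in Ioo (0:ℝ) 1, km t) * M := by
  have hbad : MeasurableSet {y : ℝ | ¬ W y ≤ M} :=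
    (measurableSet_le hW measurable_const).compl
  have hnull : mulHaar {y : ℝ | ¬ W y ≤ M} = 0 := ae_iff.mp hM
  have hS : MeasurableSet {z : ℝ × ℝ | ¬ W (z.1 / z.2) ≤ M} :=
    (measurableSet_le (hW.comp (measurable_fst.div measurable_snd))
      measurable_const).compl
  have hprod : (mulHaar.prod (volume.restrict (Ioo (0:ℝ) 1)))
      {z : ℝ × ℝ | ¬ W (z.1/z.2) ≤ M} = 0 := by
    rw [Measure.prod_apply_symm hS]
    have hz : ∀ᵐ t ∂volume.restrict (Ioo (0:ℝ) 1),
        mulHaar ((fun x : ℝ => (x, t)) ⁻¹' {z : ℝ × ℝ | ¬ W (z.1/z.2) ≤ M}) = 0 := by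
      filter_upwards [ae_restrict_mem measurableSet_Ioo] with t ht
      have hpre : (fun x : ℝ => (x, t)) ⁻¹' {z : ℝ × ℝ | ¬ W (z.1/z.2) ≤ M} =
          (fun x : ℝ => x / t) ⁻¹' {y : ℝ | ¬ W y ≤ M} := rfl
      rw [hpre]
      have hpm : MeasurableSet ((fun x : ℝ => x / t) ⁻¹' {y : ℝ | ¬ W y ≤ M}) :=
        hbad.preimage (measurable_id.div_const t)
      have hind : ∀ x : ℝ, ({y : ℝ | ¬ W y ≤ M}.indicator (1 : ℝ → ℝ≥0∞)) (x/t) =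
          ((fun x : ℝ => x / t) ⁻¹' {y : ℝ | ¬ W y ≤ M}).indicator
            (1 : ℝ → ℝ≥0∞) x := by
        intro x
        by_cases h : x/t ∈ {y : ℝ | ¬ W y ≤ M} <;>
          simp [Set.indicator_apply, h, Set.mem_preimage]
      calc mulHaar ((fun x : ℝ => x / t) ⁻¹' {y : ℝ | ¬ W y ≤ M})
          = ∫⁻ x, ((fun x : ℝ => x / t) ⁻¹' {y : ℝ | ¬ W y ≤ M}).indicator
              (1 : ℝ → ℝ≥0∞) x ∂mulHaar := by
            rw [lintegral_indicator hpm]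
            simp
        _ = ∫⁻ x, ({y : ℝ | ¬ W y ≤ M}.indicator (1 : ℝ → ℝ≥0∞)) (x/t) ∂mulHaar := by
            exact lintegral_congr fun x => (hind x).symm
        _ = ∫⁻ y, ({y : ℝ | ¬ W y ≤ M}.indicator (1 : ℝ → ℝ≥0∞)) y ∂mulHaar :=
            dil_invariance ht.1 _ (measurable_one.indicator hbad)
        _ = 0 := by
            rw [lintegral_indicator hbad]
            simp only [Pi.one_apply, MeasureTheory.setLIntegral_one]
            exact hnull
    calc ∫⁻ t in Ioo (0:ℝ) 1,
          mulHaar ((fun x : ℝ => (x, t)) ⁻¹' {z : ℝ × ℝ | ¬ W (z.1/z.2) ≤ M}) =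
        ∫⁻ _ in Ioo (0:ℝ) 1, (0:ℝ≥0∞) := lintegral_congr_ae hz
      _ = 0 := by simp
  have hae : ∀ᵐ z : ℝ × ℝ ∂(mulHaar.prod (volume.restrict (Ioo (0:ℝ) 1))),
      W (z.1/z.2) ≤ M := ae_iff.mpr hprod
  have h2 := Measure.ae_ae_of_ae_prod hae
  filter_upwards [h2] with x hx
  calc ∫⁻ t in Ioo (0:ℝ) 1, km t * W (x/t)
      ≤ ∫⁻ t in Ioo (0:ℝ) 1, km t * M :=
        lintegral_mono_ae (hx.mono fun t ht' => mul_le_mul_right ht' _)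
    _ = (∫⁻ t in Ioo (0:ℝ) 1, km t) * M := lintegral_mul_const _ hkm
end Stmt9Aux

open Stmt9Aux in
/-- Boundedness of the right-sided Laguerre fractional integral
`L_-^α : L_{α+ν,p}(ℝ_+) → L_{ν,p}(ℝ_+)`. -/
theorem stmt9 (α ν : ℝ) (hα : 0 < α) (hν : 0 < ν) (p : ℝ≥0∞) (hp : 1 ≤ p)
    (f : ℝ → ℝ) (hf : memLnu (α + ν) p f) :
    IntegrableOn (fun u => (1-u)^(2*α-1) * u^(ν-α-1) * Fg α (1-1/u)) (Set.Ioo 0 1) volume ∧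
    nuNorm ν p (Lminus α f) ≤
      ENNReal.ofReal ((Real.Gamma (2*α))⁻¹ *
        ∫ u in Set.Ioo (0:ℝ) 1, (1-u)^(2*α-1) * u^(ν-α-1) * Fg α (1-1/u)) *
      nuNorm (α + ν) p f := by
  have hΓpos : 0 < Real.Gamma (2*α) := Real.Gamma_pos_of_pos (by linarith)
  refine ⟨kernel_integrableOn hα hν, ?_⟩
  -- measurable representative of f
  have hg : AEStronglyMeasurable (fun x : ℝ => x ^ (α+ν) * f x) mulHaar :=
    hf.aestronglyMeasurable
  set g₀ : ℝ → ℝ := hg.mk _ with hg₀def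
  have hg₀m : StronglyMeasurable g₀ := hg.stronglyMeasurable_mk
  have hg₀e : (fun x : ℝ => x ^ (α+ν) * f x) =ᵐ[mulHaar] g₀ := hg.ae_eq_mk
  set f₀ : ℝ → ℝ := fun x => x ^ (-(α+ν)) * g₀ x with hf₀def
  have hf₀m : Measurable f₀ := (measurable_id.pow_const _).mul hg₀m.measurable
  have hres : volume.restrict (Ioi (0:ℝ)) ≪ mulHaar := by
    unfold mulHaar
    refine withDensity_absolutelyContinuous' measurable_inv.ennreal_ofReal.aemeasurable ?_
    filter_upwards [ae_restrict_mem measurableSet_Ioi] with x hx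
    exact (ENNReal.ofReal_pos.2 (inv_pos.2 hx)).ne'
  have hac : mulHaar ≪ volume.restrict (Ioi (0:ℝ)) := by
    unfold mulHaar
    exact withDensity_absolutelyContinuous _ _
  have hμ0 : ∀ᵐ x ∂mulHaar, x ∈ Ioi (0:ℝ) :=
    hac.ae_le (ae_restrict_mem measurableSet_Ioi)
  have hfe : f =ᵐ[volume.restrict (Ioi (0:ℝ))] f₀ := by
    have h1 : (fun x : ℝ => x ^ (α+ν) * f x) =ᵐ[volume.restrict (Ioi (0:ℝ))] g₀ :=
      hg₀e.filter_mono hres.ae_le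
    filter_upwards [h1, ae_restrict_mem measurableSet_Ioi] with x hx hx0
    show f x = x ^ (-(α+ν)) * g₀ x
    rw [← hx, ← mul_assoc, ← Real.rpow_add hx0,
      show -(α+ν) + (α+ν) = (0:ℝ) by ring, Real.rpow_zero, one_mul]
  have hLeq : ∀ x : ℝ, 0 < x → Lminus α f x = Lminus α f₀ x := by
    intro x hx
    rw [Lminus, Lminus]
    congr 1
    refine setIntegral_congr_ae measurableSet_Ioi ?_
    have h := ae_restrict_of_ae_restrict_of_subset (Ioi_subset_Ioi hx.le) hfe
    have h2 : ∀ᵐ u ∂volume, u ∈ Ioi x → f u = f₀ u := ae_imp_of_ae_restrict h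
    filter_upwards [h2] with u hu hmem
    rw [hu hmem]
  have hnuL : nuNorm ν p (Lminus α f) =
      eLpNorm (fun x => x ^ ν * Lminus α f₀ x) p mulHaar := by
    refine eLpNorm_congr_ae ?_
    filter_upwards [hμ0] with x hx
    rw [hLeq x hx]
  set g'' : ℝ → ℝ := fun x => x ^ (α+ν) * f₀ x with hg''def
  have hg''m : Measurable g'' := (measurable_id.pow_const _).mul hf₀m
  have hgg : g'' =ᵐ[mulHaar] fun x : ℝ => x ^ (α+ν) * f x := by
    filter_upwards [hg₀e, hμ0] with x hx hx0
    show x ^ (α+ν) * (x ^ (-(α+ν)) * g₀ x) = x ^ (α+ν) * f x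
    rw [← hx, ← mul_assoc, ← Real.rpow_add hx0,
      show (α+ν) + -(α+ν) = (0:ℝ) by ring, Real.rpow_zero, one_mul]
  have hnuR : nuNorm (α+ν) p f = eLpNorm g'' p mulHaar :=
    (eLpNorm_congr_ae hgg).symm
  -- the kernel, in ℝ≥0∞ form
  have hker_nonneg : 0 ≤ᵐ[volume.restrict (Ioo (0:ℝ) 1)]
      fun u : ℝ => (1-u)^(2*α-1) * u^(ν-α-1) * Fg α (1-1/u) := by
    filter_upwards [ae_restrict_mem measurableSet_Ioo] with u hu
    have hz : 1 - 1/u ≤ 0 := by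
      have h : 1 < 1/u := by rw [lt_div_iff₀ hu.1]; linarith [hu.2]
      linarith
    exact mul_nonneg (mul_nonneg (Real.rpow_nonneg (by linarith [hu.2]) _)
      (Real.rpow_nonneg hu.1.le _)) (Fg_nonneg hα hz)
  have hKae : AEMeasurable
      (fun t : ℝ => ENNReal.ofReal ((1-t)^(2*α-1) * t^(ν-α-1) * Fg α (1-1/t)))
      (volume.restrict (Ioo (0:ℝ) 1)) :=
    ((kernel_contOn hα).aemeasurable measurableSet_Ioo).ennreal_ofReal
  set km : ℝ → ℝ≥0∞ := hKae.mk _ with hkmdef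
  have hkm_meas : Measurable km := hKae.measurable_mk
  have hkm_ae : (fun t : ℝ =>
      ENNReal.ofReal ((1-t)^(2*α-1) * t^(ν-α-1) * Fg α (1-1/t)))
      =ᵐ[volume.restrict (Ioo (0:ℝ) 1)] km := hKae.ae_eq_mk
  set CK := ∫⁻ t in Ioo (0:ℝ) 1, km t with hCKdef
  have hCK : ENNReal.ofReal
      (∫ u in Ioo (0:ℝ) 1, (1-u)^(2*α-1) * u^(ν-α-1) * Fg α (1-1/u)) = CK := by
    rw [MeasureTheory.ofReal_integral_eq_lintegral_ofReal
      (kernel_integrableOn hα hν) hker_nonneg]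
    exact lintegral_congr_ae hkm_ae
  have hconst : ENNReal.ofReal ((Real.Gamma (2*α))⁻¹ *
      ∫ u in Ioo (0:ℝ) 1, (1-u)^(2*α-1) * u^(ν-α-1) * Fg α (1-1/u)) =
      ENNReal.ofReal (Real.Gamma (2*α))⁻¹ * CK := by
    rw [ENNReal.ofReal_mul (inv_nonneg.2 hΓpos.le), hCK]
  rw [hnuL, hnuR, hconst]
  set cΓ := ENNReal.ofReal (Real.Gamma (2*α))⁻¹ with hcΓdef
  set G : ℝ → ℝ≥0∞ := fun y => ENNReal.ofReal |g'' y| with hGdef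
  have hGm : Measurable G := hg''m.abs.ennreal_ofReal
  have hGnorm : ∀ y, G y = (‖g'' y‖₊ : ℝ≥0∞) := fun y =>
    (Real.enorm_eq_ofReal_abs _).symm
  have hstep : ∀ᵐ x ∂mulHaar, (‖x ^ ν * Lminus α f₀ x‖₊ : ℝ≥0∞) ≤
      cΓ * ∫⁻ t in Ioo (0:ℝ) 1, km t * G (x/t) := by
    filter_upwards [hμ0] with x hx
    refine le_trans (step1 hα f₀ hx) (le_of_eq ?_)
    congr 1
    refine lintegral_congr_ae ?_
    filter_upwards [hkm_ae] with t ht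
    rw [← ht]
  by_cases hptop : p = ∞
  · subst hptop
    simp only [eLpNorm_exponent_top]
    set M := eLpNormEssSup g'' mulHaar with hMdef
    have hMae : ∀ᵐ y ∂mulHaar, G y ≤ M := by
      filter_upwards [ae_le_eLpNormEssSup (f := g'') (μ := mulHaar)] with y hy
      rw [hGnorm y]
      exact hy
    have hT := young_top km G hkm_meas hGm hMae
    refine essSup_le_of_ae_le _ ?_
    filter_upwards [hstep, hT] with x h1 h2
    calc (‖x ^ ν * Lminus α f₀ x‖₊ : ℝ≥0∞)
        ≤ cΓ * ∫⁻ t in Ioo (0:ℝ) 1, km t * G (x/t) := h1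
      _ ≤ cΓ * (CK * M) := mul_le_mul_right h2 _
      _ = cΓ * CK * M := by rw [mul_assoc]
  · have hp0 : p ≠ 0 := (lt_of_lt_of_le zero_lt_one hp).ne'
    set r := p.toReal with hrdef
    have hr1 : 1 ≤ r := by
      rw [hrdef, ← ENNReal.toReal_one]
      exact ENNReal.toReal_mono hptop hp
    have hr0 : (0:ℝ) < r := by linarith
    rw [eLpNorm_eq_lintegral_rpow_enorm_toReal hp0 hptop,
      eLpNorm_eq_lintegral_rpow_enorm_toReal hp0 hptop]
    have hcΓtop : cΓ ^ r ≠ ∞ :=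
      ENNReal.rpow_ne_top_of_nonneg hr0.le ENNReal.ofReal_ne_top
    have hb1 : ∫⁻ x, (‖x ^ ν * Lminus α f₀ x‖₊ : ℝ≥0∞) ^ r ∂mulHaar ≤
        cΓ ^ r * (CK ^ r * ∫⁻ y, (G y) ^ r ∂mulHaar) := by
      calc ∫⁻ x, (‖x ^ ν * Lminus α f₀ x‖₊ : ℝ≥0∞) ^ r ∂mulHaar
          ≤ ∫⁻ x, (cΓ * ∫⁻ t in Ioo (0:ℝ) 1, km t * G (x/t)) ^ r ∂mulHaar :=
            lintegral_mono_ae (hstep.mono fun x hx => ENNReal.rpow_le_rpow hx hr0.le)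
        _ = cΓ ^ r * ∫⁻ x, (∫⁻ t in Ioo (0:ℝ) 1, km t * G (x/t)) ^ r ∂mulHaar := by
            rw [← lintegral_const_mul' (cΓ ^ r) _ hcΓtop]
            exact lintegral_congr fun x => ENNReal.mul_rpow_of_nonneg _ _ hr0.le
        _ ≤ cΓ ^ r * (CK ^ r * ∫⁻ y, (G y) ^ r ∂mulHaar) :=
            mul_le_mul_right (young_finite hr1 km G hkm_meas hGm) _
    calc (∫⁻ x, (‖x ^ ν * Lminus α f₀ x‖₊ : ℝ≥0∞) ^ r ∂mulHaar) ^ (1/r)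
        ≤ (cΓ ^ r * (CK ^ r * ∫⁻ y, (G y) ^ r ∂mulHaar)) ^ (1/r) :=
          ENNReal.rpow_le_rpow hb1 (by positivity)
      _ = cΓ * CK * (∫⁻ y, (G y) ^ r ∂mulHaar) ^ (1/r) := by
          rw [ENNReal.mul_rpow_of_nonneg _ _ (by positivity),
            ENNReal.mul_rpow_of_nonneg _ _ (by positivity),
            ← ENNReal.rpow_mul, ← ENNReal.rpow_mul,
            mul_one_div_cancel hr0.ne', ENNReal.rpow_one, ENNReal.rpow_one,
            ← mul_assoc]
      _ = cΓ * CK * (∫⁻ y, (‖g'' y‖₊ : ℝ≥0∞) ^ r ∂mulHaar) ^ (1/r) := by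
          congr 2
          exact lintegral_congr fun y => by rw [hGnorm y]
end

section
/- Let a > 0 and x > u > 0. Then (1/Γ(2a)) u^{−a} F_a(1 − x/u) = (2/Γ(a)²) ∫₀^∞ ( 2√(xu) · cosh(y) + x + u )^{−a} dy; equivalently, the kernel ((x−u)^{2a−1}/Γ(2a)) u^{−a} F_a(1 − x/u) of the Laguerre fractional integral equals (2(x−u)^{2a−1}/Γ(a)²) ∫₀^∞ ( 2√(xu) cosh(y) + x + u )^{−a} dy. -/
open MeasureTheory Set
open scoped ENNReal

private lemma stmt17_rpow_core (a t D S : ℝ) (ht0 : 0 < t) (ht1 : t < 1) (hD0 : 0 < D) (hS0 : 0 < S)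
    (hDS : t*(1-t)*S = D) :
    t*(1-t) * (t^(a-1)*(1-t)^(a-1)*D^(-a)) = S^(-a) := by
  have h1t : 0 < 1 - t := by linarith
  rw [Real.rpow_sub ht0, Real.rpow_sub h1t]
  have h2 : t*(1-t) * (t^a/t^(1:ℝ) * ((1-t)^a/(1-t)^(1:ℝ)) * D^(-a)) = (t*(1-t))^a * D^(-a) := by
    rw [Real.rpow_one, Real.rpow_one, Real.mul_rpow ht0.le h1t.le]; field_simp
  rw [h2, show t*(1-t) = D/S by rw [eq_div_iff hS0.ne']; exact hDS,
    Real.div_rpow hD0.le hS0.le, Real.rpow_neg hD0.le, Real.rpow_neg hS0.le]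
  have hDa : D^a ≠ 0 := (Real.rpow_pos_of_pos hD0 a).ne'
  field_simp

private lemma stmt17_pointwise (a x u : ℝ) (ha : 0 < a) (hu : 0 < u) (hx : u < x) (y : ℝ)
    (c : ℝ) (hc : 0 < c) (hc2 : c = Real.sqrt (x/u)) :
    |(-(c * Real.exp y) / (1 + c * Real.exp y)^2)| *
      (((1 + c * Real.exp y)⁻¹)^(a-1) * (1-(1 + c * Real.exp y)⁻¹)^(a-1) *
        ((1-(1 + c * Real.exp y)⁻¹)*u + (1 + c * Real.exp y)⁻¹*x)^(-a))
      = (2 * Real.sqrt (x*u) * Real.cosh y + x + u)^(-a) := by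
  have hx0 : 0 < x := hu.trans hx
  set e : ℝ := c * Real.exp y with he_def
  have he : 0 < e := by positivity
  have h1e : 0 < 1 + e := by positivity
  set t : ℝ := (1 + e)⁻¹ with ht_def
  have ht0 : 0 < t := inv_pos.mpr h1e
  have ht1 : t < 1 := by rw [ht_def, inv_lt_one_iff₀]; right; linarith
  have h1t : 1 - t = e * t := by
    have h0 : (1+e) * t = 1 := by rw [ht_def]; field_simp
    linear_combination -h0
  have habs : |(-e / (1 + e)^2)| = t * (1 - t) := by
    rw [abs_div, abs_neg, abs_of_pos he, abs_of_pos (by positivity : (0:ℝ) < (1+e)^2)]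
    rw [h1t, ht_def]; field_simp
  have hsq1 : Real.sqrt (x*u) = u * c := by
    rw [hc2, show x*u = (x/u) * u^2 by field_simp, Real.sqrt_mul (by positivity) (u^2),
      Real.sqrt_sq hu.le]; ring
  have hsq2 : Real.sqrt (x*u) * c = x := by
    rw [hc2, ← Real.sqrt_mul (by positivity) (x/u)]
    rw [show x*u*(x/u) = x^2 by field_simp, Real.sqrt_sq hx0.le]
  set S : ℝ := 2 * Real.sqrt (x*u) * Real.cosh y + x + u with hS_def
  have hS0 : 0 < S := by
    have := Real.cosh_pos (x := y)
    have := Real.sqrt_nonneg (x*u)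
    nlinarith
  have hA : Real.sqrt (x*u) * Real.exp y = u * e := by rw [hsq1, he_def]; ring
  have hB : Real.sqrt (x*u) * Real.exp (-y) = x / e := by
    rw [Real.exp_neg, eq_div_iff he.ne', he_def]
    calc Real.sqrt (x*u) * (Real.exp y)⁻¹ * (c * Real.exp y)
        = Real.sqrt (x*u) * c := by field_simp
      _ = x := hsq2
  have hSeq : S = u * e + x / e + x + u := by
    rw [hS_def, Real.cosh_eq]; linear_combination hA + hB
  set D : ℝ := (1 - t) * u + t * x with hD_def
  have hD0 : 0 < D := by rw [hD_def]; nlinarith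
  have hDS : t * (1 - t) * S = D := by
    rw [hSeq, hD_def, h1t, ht_def]
    field_simp
    ring
  rw [habs]
  exact stmt17_rpow_core a t D S ht0 ht1 hD0 hS0 hDS


private lemma stmt17_key (a x u : ℝ) (ha : 0 < a) (hu : 0 < u) (hx : u < x)
    (hpt : ∀ y c : ℝ, 0 < c → c = Real.sqrt (x/u) →
      |(-(c * Real.exp y) / (1 + c * Real.exp y)^2)| *
      (((1 + c * Real.exp y)⁻¹)^(a-1) * (1-(1 + c * Real.exp y)⁻¹)^(a-1) *
        ((1-(1 + c * Real.exp y)⁻¹)*u + (1 + c * Real.exp y)⁻¹*x)^(-a))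
      = (2 * Real.sqrt (x*u) * Real.cosh y + x + u)^(-a)) :
    u^(-a) * (∫ t in (0:ℝ)..1, t^(a-1) * (1-t)^(a-1) * (1 - (1 - x/u)*t)^(-a))
      = 2 * ∫ y in Set.Ioi (0:ℝ), (2 * Real.sqrt (x*u) * Real.cosh y + x + u)^(-a) := by
  have hx0 : 0 < x := hu.trans hx
  set c : ℝ := Real.sqrt (x/u) with hc_def
  have hc : 0 < c := Real.sqrt_pos.mpr (by positivity)
  set φ : ℝ → ℝ := fun y => (1 + c * Real.exp y)⁻¹ with hφ_def
  set φ' : ℝ → ℝ := fun y => -(c * Real.exp y) / (1 + c * Real.exp y)^2 with hφ'_def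
  have h1e : ∀ y : ℝ, 0 < 1 + c * Real.exp y := fun y => by positivity
  have hderiv : ∀ y ∈ Set.univ, HasDerivWithinAt φ (φ' y) Set.univ y := by
    intro y _
    have h1 : HasDerivAt (fun y : ℝ => 1 + c * Real.exp y) (c * Real.exp y) y :=
      ((Real.hasDerivAt_exp y).const_mul c).const_add 1
    exact (h1.inv (h1e y).ne').hasDerivWithinAt
  have hinj : Set.InjOn φ Set.univ := by
    intro y1 _ y2 _ h
    have h2 : 1 + c * Real.exp y1 = 1 + c * Real.exp y2 := inv_injective h
    exact Real.exp_injective (mul_left_cancel₀ hc.ne' (add_left_cancel h2))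
  have himg : φ '' Set.univ = Set.Ioo (0:ℝ) 1 := by
    apply Set.eq_of_subset_of_subset
    · rintro t ⟨y, -, rfl⟩
      refine ⟨inv_pos.mpr (h1e y), ?_⟩
      rw [hφ_def]
      simp only
      rw [inv_lt_one_iff₀]
      right; nlinarith [Real.exp_pos y]
    · intro t ht
      have hq : 0 < (t⁻¹ - 1)/c := by
        have h5 : 1 < t⁻¹ := (one_lt_inv₀ ht.1).mpr ht.2
        have : 0 < t⁻¹ - 1 := by linarith
        positivity
      refine ⟨Real.log ((t⁻¹ - 1)/c), trivial, ?_⟩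
      show (1 + c * Real.exp (Real.log ((t⁻¹ - 1)/c)))⁻¹ = t
      rw [Real.exp_log hq]
      have ht0 := ht.1
      field_simp
      ring
  -- Step 1: interval integral to Ioo
  rw [intervalIntegral.integral_of_le (by norm_num : (0:ℝ) ≤ 1),
    MeasureTheory.integral_Ioc_eq_integral_Ioo]
  -- Step 2: pull u^(-a) inside and rewrite the integrand
  rw [← MeasureTheory.integral_const_mul]
  rw [setIntegral_congr_fun measurableSet_Ioo
    (show Set.EqOn (fun t => u^(-a) * (t^(a-1) * (1-t)^(a-1) * (1 - (1 - x/u)*t)^(-a)))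
      (fun t => t^(a-1) * (1-t)^(a-1) * ((1-t)*u + t*x)^(-a)) (Set.Ioo 0 1) by
      intro t ht
      simp only
      have hw : 0 < 1 - (1 - x/u)*t := by
        have h8 : 1 - (1 - x/u)*t = (1-t) + (x/u)*t := by ring
        rw [h8]
        have := ht.1; have := ht.2
        have hxu : 0 < x/u := by positivity
        nlinarith
      have h7 : (1-t)*u + t*x = u * (1 - (1-x/u)*t) := by field_simp; ring
      rw [h7, Real.mul_rpow hu.le hw.le]
      ring)]
  -- Step 3: change of variables
  rw [← himg, MeasureTheory.integral_image_eq_integral_abs_deriv_smul MeasurableSet.univ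
    hderiv hinj]
  rw [Measure.restrict_univ]
  -- Step 4: pointwise identification
  have h9 : (fun y => |φ' y| • ((φ y)^(a-1) * (1-(φ y))^(a-1) * ((1-(φ y))*u + (φ y)*x)^(-a)))
      = fun y => (2 * Real.sqrt (x*u) * Real.cosh y + x + u)^(-a) := by
    funext y
    rw [smul_eq_mul]
    exact hpt y c hc hc_def
  rw [h9]
  -- Step 5: evenness
  have h10 : (fun y : ℝ => (2 * Real.sqrt (x*u) * Real.cosh y + x + u)^(-a))
      = fun y : ℝ => (2 * Real.sqrt (x*u) * Real.cosh |y| + x + u)^(-a) := by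
    funext y; rw [Real.cosh_abs]
  conv_lhs => rw [h10]
  exact integral_comp_abs (f := fun z => (2 * Real.sqrt (x*u) * Real.cosh z + x + u)^(-a))


/-- The Legendre-integral representation of the kernel of the Laguerre fractional
integral. -/
theorem stmt17 (a x u : ℝ) (ha : 0 < a) (hu : 0 < u) (hx : u < x) :
    (Real.Gamma (2*a))⁻¹ * u^(-a) * Fg a (1 - x/u)
      = 2 / (Real.Gamma a)^2 *
          ∫ y in Set.Ioi (0:ℝ), (2 * Real.sqrt (x*u) * Real.cosh y + x + u)^(-a) ∧
    (x-u)^(2*a-1) / Real.Gamma (2*a) * u^(-a) * Fg a (1 - x/u)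
      = 2 * (x-u)^(2*a-1) / (Real.Gamma a)^2 *
          ∫ y in Set.Ioi (0:ℝ), (2 * Real.sqrt (x*u) * Real.cosh y + x + u)^(-a) := by
  have hΓ2 : Real.Gamma (2*a) ≠ 0 := (Real.Gamma_pos_of_pos (by linarith)).ne'
  have hΓa : Real.Gamma a ≠ 0 := (Real.Gamma_pos_of_pos ha).ne'
  have key := stmt17_key a x u ha hu hx
    (fun y c hc hc2 => stmt17_pointwise a x u ha hu hx y c hc hc2)
  have h1 : (Real.Gamma (2*a))⁻¹ * u^(-a) * Fg a (1 - x/u)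
      = 2 / (Real.Gamma a)^2 *
          ∫ y in Set.Ioi (0:ℝ), (2 * Real.sqrt (x*u) * Real.cosh y + x + u)^(-a) := by
    rw [Fg]
    have hinv : Real.Gamma (2*a) * (Real.Gamma (2*a))⁻¹ = 1 := mul_inv_cancel₀ hΓ2
    linear_combination (1/(Real.Gamma a)^2) * key +
      ((u^(-a) * ∫ t in (0:ℝ)..1, t^(a-1) * (1-t)^(a-1) * (1 - (1 - x/u)*t)^(-a)) /
        (Real.Gamma a)^2) * hinv
  exact ⟨h1, by linear_combination (x-u)^(2*a-1) * h1⟩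
end

section
/- Let α > 1/2, β > 0, and x > t > 0. Then (1/(Γ(2β)Γ(2α))) ∫_t^x (x−u)^{2β−1} (u−t)^{2α−1} u^{−β} F_β(1 − x/u) F_α(1 − u/t) du = ( t^{2α+β−1} / Γ(2(α+β)) ) · (x/t − 1)^{2(α+β)−1} · F_{α+β}(1 − x/t). -/
open MeasureTheory Set
open scoped ENNReal

lemma st18_ii {p q c d : ℝ} (hp : 0 < p) (hq : 0 < q) (hcd : c < d)
    {w : ℝ → ℝ} (hw : ContinuousOn w (Icc c d)) :
    IntegrableOn (fun u => (d-u)^(q-1) * (u-c)^(p-1) * w u) (Ioo c d) := by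
  rw [← intervalIntegrable_iff_integrableOn_Ioo_of_le hcd.le]
  set m := (c+d)/2 with hm
  have hcm : c < m := by simp only [hm]; linarith
  have hmd : m < d := by simp only [hm]; linarith
  apply IntervalIntegrable.trans (b := m)
  · have h1 : IntervalIntegrable (fun u => (u-c)^(p-1)) volume c m := by
      have := (intervalIntegral.intervalIntegrable_rpow' (a := 0) (b := m - c)
        (r := p-1) (by linarith)).comp_sub_right c
      simpa using this
    have h2 : ContinuousOn (fun u => (d-u)^(q-1) * w u) (uIcc c m) := by
      rw [uIcc_of_le hcm.le]
      refine ContinuousOn.mul (ContinuousOn.rpow_const (by fun_prop) fun u hu => ?_)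
        (hw.mono (Icc_subset_Icc le_rfl hmd.le))
      left; have := hu.2; simp only [mem_Icc] at hu; nlinarith [hu.2]
    have h3 := h1.mul_continuousOn h2
    have : (fun u => (u-c)^(p-1) * ((d-u)^(q-1) * w u))
        = fun u => (d-u)^(q-1) * (u-c)^(p-1) * w u := by funext u; ring
    rwa [this] at h3
  · have h1 : IntervalIntegrable (fun u => (d-u)^(q-1)) volume m d := by
      have := (intervalIntegral.intervalIntegrable_rpow' (a := 0) (b := d - m)
        (r := q-1) (by linarith)).comp_sub_left d
      simpa using this.symm
    have h2 : ContinuousOn (fun u => (u-c)^(p-1) * w u) (uIcc m d) := by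
      rw [uIcc_of_le hmd.le]
      refine ContinuousOn.mul (ContinuousOn.rpow_const (by fun_prop) fun u hu => ?_)
        (hw.mono (Icc_subset_Icc hcm.le le_rfl))
      left; simp only [mem_Icc] at hu; nlinarith [hu.1]
    have h3 := h1.mul_continuousOn h2
    have : (fun u => (d-u)^(q-1) * ((u-c)^(p-1) * w u))
        = fun u => (d-u)^(q-1) * (u-c)^(p-1) * w u := by funext u; ring
    rwa [this] at h3

lemma st18_betaReal {a b : ℝ} (ha : 0 < a) (hb : 0 < b) :
    ∫ s in (0:ℝ)..1, s^(a-1) * (1-s)^(b-1) = Real.Gamma a * Real.Gamma b / Real.Gamma (a+b) := by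
  have h := Complex.Gamma_mul_Gamma_eq_betaIntegral (s := (a:ℂ)) (t := (b:ℂ))
    (by simpa using ha) (by simpa using hb)
  have hbeta : Complex.betaIntegral a b
      = ((∫ s in (0:ℝ)..1, s^(a-1) * (1-s)^(b-1) : ℝ) : ℂ) := by
    rw [Complex.betaIntegral, ← intervalIntegral.integral_ofReal]
    refine intervalIntegral.integral_congr fun s hs => ?_
    rw [uIcc_of_le zero_le_one] at hs
    rw [show ((a:ℂ) - 1) = ((a-1 : ℝ) : ℂ) by push_cast; ring,
        show ((b:ℂ) - 1) = ((b-1 : ℝ) : ℂ) by push_cast; ring,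
        show (1 - (s:ℂ)) = ((1 - s : ℝ) : ℂ) by push_cast; ring,
        ← Complex.ofReal_cpow hs.1, ← Complex.ofReal_cpow (by linarith [hs.2]),
        ← Complex.ofReal_mul]
  rw [hbeta, ← Complex.ofReal_add, Complex.Gamma_ofReal, Complex.Gamma_ofReal,
    Complex.Gamma_ofReal, ← Complex.ofReal_mul, ← Complex.ofReal_mul] at h
  have h' := Complex.ofReal_inj.mp h
  have hne : Real.Gamma (a+b) ≠ 0 := (Real.Gamma_pos_of_pos (by linarith)).ne'
  field_simp
  linarith [h']

lemma st18_beta_conv {a b c d : ℝ} (ha : 0 < a) (hb : 0 < b) (hcd : c < d) :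
    ∫ u in Ioo c d, (d-u)^(b-1) * (u-c)^(a-1)
      = Real.Gamma a * Real.Gamma b / Real.Gamma (a+b) * (d-c)^(a+b-1) := by
  have hdc : (0:ℝ) < d - c := by linarith
  have h1 : ∫ u in Ioo c d, (d-u)^(b-1) * (u-c)^(a-1)
      = ∫ u in c..d, (d-u)^(b-1) * (u-c)^(a-1) := by
    rw [intervalIntegral.integral_of_le hcd.le, integral_Ioc_eq_integral_Ioo]
  have h2 := intervalIntegral.integral_comp_mul_add (a := (0:ℝ)) (b := 1)
    (fun u => (d-u)^(b-1) * (u-c)^(a-1)) hdc.ne' c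
  simp only [mul_zero, zero_add, mul_one, sub_add_cancel, smul_eq_mul] at h2
  have h3 : ∫ s in (0:ℝ)..1, (d - ((d-c) * s + c))^(b-1) * ((d-c) * s + c - c)^(a-1)
      = (d-c)^(b-1) * (d-c)^(a-1) * ∫ s in (0:ℝ)..1, s^(a-1) * (1-s)^(b-1) := by
    rw [← intervalIntegral.integral_const_mul]
    refine intervalIntegral.integral_congr fun s hs => ?_
    rw [uIcc_of_le zero_le_one] at hs
    have e1 : d - ((d-c) * s + c) = (d-c) * (1-s) := by ring
    have e2 : (d-c) * s + c - c = (d-c) * s := by ring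
    rw [e1, e2, Real.mul_rpow hdc.le (by linarith [hs.2]), Real.mul_rpow hdc.le hs.1]
    ring
  have h4 : ∫ u in c..d, (d-u)^(b-1) * (u-c)^(a-1)
      = (d-c) * ∫ s in (0:ℝ)..1, (d - ((d-c) * s + c))^(b-1) * ((d-c) * s + c - c)^(a-1) := by
    rw [h2]; field_simp
  rw [h1, h4, h3, st18_betaReal ha hb,
    show (a+b-1) = 1+(b-1)+(a-1) by ring, Real.rpow_add hdc, Real.rpow_add hdc, Real.rpow_one]
  ring

lemma st18_wcont {c d r : ℝ} (hc : 0 < c) : ContinuousOn (fun u : ℝ => u^(-r)) (Icc c d) :=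
  ContinuousOn.rpow_const (by fun_prop) fun u hu => Or.inl (by simp only [mem_Icc] at hu; nlinarith [hu.1])

lemma st18_iiw {p q r c d : ℝ} (hp : 0 < p) (hq : 0 < q) (hc : 0 < c) (hcd : c < d) :
    IntegrableOn (fun u => (d-u)^(q-1) * (u-c)^(p-1) * u^(-r)) (Ioo c d) :=
  st18_ii hp hq hcd (st18_wcont hc)

lemma st18_conv_le {p q r c d : ℝ} (hp : 0 < p) (hq : 0 < q) (hr : 0 ≤ r)
    (hc : 0 < c) (hcd : c < d) :
    ∫ u in Ioo c d, (d-u)^(q-1) * (u-c)^(p-1) * u^(-r)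
      ≤ c^(-r) * (Real.Gamma p * Real.Gamma q / Real.Gamma (p+q)) * (d-c)^(p+q-1) := by
  have h1 : IntegrableOn (fun u => (d-u)^(q-1) * (u-c)^(p-1) * u^(-r)) (Ioo c d) :=
    st18_iiw hp hq hc hcd
  have h2 : IntegrableOn (fun u => (d-u)^(q-1) * (u-c)^(p-1) * c^(-r)) (Ioo c d) :=
    st18_ii hp hq hcd (continuousOn_const)
  have h3 := MeasureTheory.setIntegral_mono_on h1 h2 measurableSet_Ioo (fun u hu => by
    have hu0 : 0 < u := hc.trans hu.1
    have : u^(-r) ≤ c^(-r) :=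
      Real.rpow_le_rpow_of_nonpos hc hu.1.le (neg_nonpos.mpr hr)
    have hnn : 0 ≤ (d-u)^(q-1) * (u-c)^(p-1) :=
      mul_nonneg (Real.rpow_nonneg (by linarith [hu.2]) _) (Real.rpow_nonneg (by linarith [hu.1]) _)
    exact mul_le_mul_of_nonneg_left this hnn)
  calc ∫ u in Ioo c d, (d-u)^(q-1) * (u-c)^(p-1) * u^(-r)
      ≤ ∫ u in Ioo c d, (d-u)^(q-1) * (u-c)^(p-1) * c^(-r) := h3
    _ = c^(-r) * (Real.Gamma p * Real.Gamma q / Real.Gamma (p+q)) * (d-c)^(p+q-1) := by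
        rw [MeasureTheory.integral_mul_const, st18_beta_conv hp hq hcd]; ring

lemma st18_nonnegI {c d : ℝ} {f : ℝ → ℝ} (h : ∀ u ∈ Ioo c d, 0 ≤ f u) :
    0 ≤ ∫ u in Ioo c d, f u :=
  MeasureTheory.setIntegral_nonneg measurableSet_Ioo h

noncomputable def st18J (a x t : ℝ) : ℝ :=
  ∫ u in Ioo t x, (x-u)^(a-1) * (u-t)^(a-1) * u^(-a)

lemma st18_Fg_eq {a t x : ℝ} (ha : 0 < a) (ht : 0 < t) (htx : t < x) :
    Fg a (1 - x/t) = Real.Gamma (2*a) / (Real.Gamma a)^2 * t^a * (x-t)^(1-2*a) * st18J a x t := by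
  have hxt : (0:ℝ) < x - t := by linarith
  have hne : x - t ≠ 0 := hxt.ne'
  set g : ℝ → ℝ := fun u => ((u-t)/(x-t))^(a-1) * ((x-u)/(x-t))^(a-1) * u^(-a) with hg
  have step1 : ∫ s in (0:ℝ)..1, s^(a-1) * (1-s)^(a-1) * (1 - (1-x/t)*s)^(-a)
      = t^a * ∫ s in (0:ℝ)..1, g ((x-t) * s + t) := by
    rw [← intervalIntegral.integral_const_mul]
    refine intervalIntegral.integral_congr fun s hs => ?_
    rw [uIcc_of_le zero_le_one] at hs
    obtain ⟨hs0, hs1⟩ := hs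
    have hu0 : 0 < (x-t) * s + t := by nlinarith
    have e1 : ((x-t) * s + t - t)/(x-t) = s := by field_simp; ring
    have e2 : (x - ((x-t) * s + t))/(x-t) = 1 - s := by field_simp; ring
    have e3 : 1 - (1-x/t)*s = ((x-t) * s + t)/t := by field_simp; ring
    rw [hg]; simp only []
    rw [e1, e2, e3, Real.div_rpow hu0.le ht.le, Real.rpow_neg hu0.le, Real.rpow_neg ht.le,
      div_eq_mul_inv, inv_inv]
    ring
  have step2 : ∫ s in (0:ℝ)..1, g ((x-t) * s + t) = (x-t)⁻¹ * ∫ u in t..x, g u := by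
    have h2 := intervalIntegral.integral_comp_mul_add (a := (0:ℝ)) (b := 1) g hne t
    simpa using h2
  have step3 : ∫ u in t..x, g u
      = ((x-t)^(a-1))⁻¹ * ((x-t)^(a-1))⁻¹ * st18J a x t := by
    rw [intervalIntegral.integral_of_le htx.le, integral_Ioc_eq_integral_Ioo, st18J,
      ← MeasureTheory.integral_const_mul]
    refine MeasureTheory.setIntegral_congr_fun measurableSet_Ioo fun u hu => ?_
    obtain ⟨hu1, hu2⟩ := hu
    rw [hg]; simp only []
    rw [Real.div_rpow (by linarith) hxt.le, Real.div_rpow (by linarith) hxt.le,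
      div_eq_mul_inv, div_eq_mul_inv]
    ring
  have collect : (x-t)⁻¹ * ((x-t)^(a-1))⁻¹ * ((x-t)^(a-1))⁻¹ = (x-t)^(1-2*a) := by
    rw [show (1-2*a) = (-1) + (-(a-1)) + (-(a-1)) by ring, Real.rpow_add hxt,
      Real.rpow_add hxt, Real.rpow_neg_one, Real.rpow_neg hxt.le]
  rw [Fg, step1, step2, step3, ← collect]
  ring

lemma st18_invert {al g t v : ℝ} (ht : 0 < t) (htv : t < v) :
    ∫ w in Ioo t v, (v-w)^(g-1) * (w-t)^(al-1) * w^(-al)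
      = v^(g-al) * ∫ s in Ioo t v, (s-t)^(g-1) * (v-s)^(al-1) * s^(-g) := by
  have hv : 0 < v := ht.trans htv
  have htv0 : 0 < t * v := mul_pos ht hv
  have himg : (fun s => t*v/s) '' Ioo t v = Ioo t v := by
    ext y; constructor
    · rintro ⟨s, hs, rfl⟩
      have hs0 : 0 < s := ht.trans hs.1
      refine ⟨?_, ?_⟩
      · rw [lt_div_iff₀ hs0]; nlinarith [hs.2]
      · rw [div_lt_iff₀ hs0]; nlinarith [hs.1]
    · intro hy
      have hy0 : 0 < y := ht.trans hy.1
      refine ⟨t*v/y, ⟨?_, ?_⟩, by field_simp⟩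
      · rw [lt_div_iff₀ hy0]; nlinarith [hy.2]
      · rw [div_lt_iff₀ hy0]; nlinarith [hy.1]
  have hderiv : ∀ s ∈ Ioo t v, HasDerivWithinAt (fun s => t*v/s) (-(t*v)/s^2) (Ioo t v) s := by
    intro s hs
    have hs0 : s ≠ 0 := (ht.trans hs.1).ne'
    have h1 : HasDerivAt (fun s : ℝ => t*v/s) (-(t*v)/s^2) s := by
      have h2 := (hasDerivAt_inv hs0).const_mul (t*v)
      have e1 : (fun s : ℝ => t*v * s⁻¹) = fun s : ℝ => t*v/s := by
        funext u; rw [div_eq_mul_inv]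
      have e2 : t*v * -(s^2)⁻¹ = -(t*v)/s^2 := by field_simp
      rwa [e1, e2] at h2
    exact h1.hasDerivWithinAt
  have hinj : InjOn (fun s => t*v/s) (Ioo t v) := by
    intro a ha b hb h
    have ha0 : a ≠ 0 := (ht.trans ha.1).ne'
    have hb0 : b ≠ 0 := (ht.trans hb.1).ne'
    field_simp at h
    exact h.symm
  have key := MeasureTheory.integral_image_eq_integral_abs_deriv_smul measurableSet_Ioo
    hderiv hinj (fun w => (v-w)^(g-1) * (w-t)^(al-1) * w^(-al))
  rw [himg] at key
  rw [key, ← MeasureTheory.integral_const_mul]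
  refine MeasureTheory.setIntegral_congr_fun measurableSet_Ioo fun s hs => ?_
  obtain ⟨hs1, hs2⟩ := hs
  have hs0 : 0 < s := ht.trans hs1
  have hX : (0:ℝ) ≤ s - t := by linarith
  have hY : (0:ℝ) ≤ v - s := by linarith
  have habs : |(-(t*v)/s^2)| = t*v/s^2 := by
    rw [abs_div, abs_neg, abs_of_pos htv0, abs_of_pos (by positivity)]
  have e1 : v - t*v/s = v*(s-t)/s := by field_simp
  have e2 : t*v/s - t = t*(v-s)/s := by field_simp
  simp only [smul_eq_mul]
  rw [habs, e1, e2,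
    Real.div_rpow (mul_nonneg hv.le hX) hs0.le,
    Real.div_rpow (mul_nonneg ht.le hY) hs0.le,
    Real.div_rpow (mul_nonneg ht.le hv.le) hs0.le,
    Real.mul_rpow hv.le hX, Real.mul_rpow ht.le hY, Real.mul_rpow ht.le hv.le,
    div_eq_mul_inv, div_eq_mul_inv, div_eq_mul_inv, div_eq_mul_inv,
    ← Real.rpow_neg hs0.le, ← Real.rpow_neg hs0.le, ← Real.rpow_neg hs0.le,
    ← Real.rpow_natCast s 2]
  push_cast
  rw [← Real.rpow_neg hs0.le]
  have ht3 : t * (t^(al-1) * t^(-al)) = 1 := by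
    nth_rewrite 1 [← Real.rpow_one t]
    rw [← Real.rpow_add ht, ← Real.rpow_add ht, show (1:ℝ)+(al-1+-al) = 0 by ring,
      Real.rpow_zero]
  have hv3 : v * (v^(g-1) * v^(-al)) = v^(g-al) := by
    nth_rewrite 1 [← Real.rpow_one v]
    rw [← Real.rpow_add hv, ← Real.rpow_add hv, show (1:ℝ)+(g-1+-al) = g-al by ring]
  have hs3 : s^(-2:ℝ) * (s^(-(g-1)) * (s^(-(al-1)) * s^(- -al))) = s^(-g) := by
    rw [← Real.rpow_add hs0, ← Real.rpow_add hs0, ← Real.rpow_add hs0,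
      show (-2:ℝ)+(-(g-1)+(-(al-1)+ - -al)) = -g by ring]
  calc t * v * s ^ (-2:ℝ) *
      (v ^ (g - 1) * (s - t) ^ (g - 1) * s ^ (-(g - 1)) * (t ^ (al - 1) * (v - s) ^ (al - 1) * s ^ (-(al - 1))) *
        (t ^ (-al) * v ^ (-al) * s ^ (- -al)))
      = (t * (t^(al-1) * t^(-al))) * (v * (v^(g-1) * v^(-al)))
        * (s^(-2:ℝ) * (s^(-(g-1)) * (s^(-(al-1)) * s^(- -al))))
        * ((s-t)^(g-1) * (v-s)^(al-1)) := by ring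
    _ = v ^ (g - al) * ((s - t) ^ (g - 1) * (v - s) ^ (al - 1) * s ^ (-g)) := by
      rw [ht3, hv3, hs3]; ring

lemma st18_meas_param {G : ℝ × ℝ → ℝ} (hG : Measurable G) (t : ℝ) :
    Measurable (fun u => ∫ w in Ioo t u, G (u, w)) := by
  have hS : MeasurableSet {p : ℝ × ℝ | t < p.2 ∧ p.2 < p.1} :=
    (measurableSet_lt measurable_const measurable_snd).inter
      (measurableSet_lt measurable_snd measurable_fst)
  have key : ∀ u, ∫ w in Ioo t u, G (u, w)
      = ∫ w, ({p : ℝ × ℝ | t < p.2 ∧ p.2 < p.1}.indicator G) (u, w) := by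
    intro u
    rw [← MeasureTheory.integral_indicator measurableSet_Ioo]
    refine MeasureTheory.integral_congr_ae (Filter.Eventually.of_forall fun w => ?_)
    simp only [Set.indicator_apply, mem_Ioo, mem_setOf_eq]
  simp_rw [key]
  have hm : StronglyMeasurable (Function.uncurry fun u w =>
      ({p : ℝ × ℝ | t < p.2 ∧ p.2 < p.1}.indicator G) (u, w)) := by
    apply Measurable.stronglyMeasurable
    exact (hG.indicator hS).comp measurable_id
  exact hm.integral_prod_right.measurable

lemma st18_swap {c x : ℝ} (F : ℝ → ℝ → ℝ)
    (hFm : Measurable (fun p : ℝ × ℝ => F p.1 p.2))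
    (h0 : ∀ b ∈ Ioo c x, ∀ a ∈ Ioo c b, 0 ≤ F a b)
    (hsec : ∀ b ∈ Ioo c x, IntegrableOn (fun a => F a b) (Ioo c b))
    (hout : IntegrableOn (fun b => ∫ a in Ioo c b, F a b) (Ioo c x)) :
    ∫ b in Ioo c x, ∫ a in Ioo c b, F a b = ∫ a in Ioo c x, ∫ b in Ioo a x, F a b := by
  set μ := volume.restrict (Ioo c x) with hμ
  set f : ℝ → ℝ → ℝ := fun b a => (Ioo c b).indicator (fun a' => F a' b) a with hf
  have hrr : ∀ b ∈ Ioo c x, μ.restrict (Ioo c b) = volume.restrict (Ioo c b) := by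
    intro b hb
    rw [hμ, Measure.restrict_restrict measurableSet_Ioo,
      Set.inter_eq_self_of_subset_left (Ioo_subset_Ioo le_rfl hb.2.le)]
  have key1 : ∀ b ∈ Ioo c x, ∫ a, f b a ∂μ = ∫ a in Ioo c b, F a b := by
    intro b hb
    simp only [hf]
    rw [MeasureTheory.integral_indicator measurableSet_Ioo, hrr b hb]
  have key2 : ∀ a ∈ Ioo c x, ∫ b, f b a ∂μ = ∫ b in Ioo a x, F a b := by
    intro a ha
    have e : ∀ b ∈ Ioo c x, f b a = (Ioi a).indicator (fun b' => F a b') b := by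
      intro b hb
      simp only [hf, Set.indicator_apply, mem_Ioo, mem_Ioi]
      by_cases h : a < b <;> simp [h, ha.1]
    rw [MeasureTheory.setIntegral_congr_fun measurableSet_Ioo e,
      MeasureTheory.integral_indicator measurableSet_Ioi,
      Measure.restrict_restrict measurableSet_Ioi,
      show Ioi a ∩ Ioo c x = Ioo a x by
        ext y; simp only [mem_inter_iff, mem_Ioi, mem_Ioo]
        constructor
        · rintro ⟨h1, h2, h3⟩; exact ⟨h1, h3⟩
        · rintro ⟨h1, h2⟩; exact ⟨h1, ha.1.trans h1, h2⟩]
  have hfm : AEStronglyMeasurable (Function.uncurry f) (μ.prod μ) := by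
    have hS : MeasurableSet {p : ℝ × ℝ | c < p.2 ∧ p.2 < p.1} :=
      (measurableSet_lt measurable_const measurable_snd).inter
        (measurableSet_lt measurable_snd measurable_fst)
    have : Function.uncurry f = {p : ℝ × ℝ | c < p.2 ∧ p.2 < p.1}.indicator
        (fun p => F p.2 p.1) := by
      funext p
      rcases p with ⟨b, a⟩
      simp only [Function.uncurry, hf, Set.indicator_apply, mem_Ioo, mem_setOf_eq]
    rw [this]
    exact (((hFm.comp measurable_swap)).indicator hS).aestronglyMeasurable
  have hint : Integrable (Function.uncurry f) (μ.prod μ) := by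
    rw [MeasureTheory.integrable_prod_iff hfm]
    constructor
    · refine (ae_restrict_iff' measurableSet_Ioo).mpr (ae_of_all _ fun b hb => ?_)
      simp only [hf]
      apply MeasureTheory.IntegrableOn.integrable_indicator _ measurableSet_Ioo
      rw [IntegrableOn, hrr b hb]
      exact hsec b hb
    · have he : ∀ b ∈ Ioo c x, ∫ a, ‖f b a‖ ∂μ = ∫ a in Ioo c b, F a b := by
        intro b hb
        have : ∀ a, ‖f b a‖ = f b a := by
          intro a
          rw [Real.norm_eq_abs, abs_of_nonneg]
          simp only [hf, Set.indicator_apply]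
          split_ifs with h
          · exact h0 b hb a h
          · exact le_rfl
        simp_rw [this]
        exact key1 b hb
      apply MeasureTheory.Integrable.congr hout
      exact (ae_restrict_iff' measurableSet_Ioo).mpr (ae_of_all _ fun b hb => (he b hb).symm)
  have swap := MeasureTheory.integral_integral_swap hint
  calc ∫ b in Ioo c x, ∫ a in Ioo c b, F a b
      = ∫ b, ∫ a, f b a ∂μ ∂μ :=
        (MeasureTheory.setIntegral_congr_fun measurableSet_Ioo fun b hb => (key1 b hb).symm)
    _ = ∫ a, ∫ b, f b a ∂μ ∂μ := swap
    _ = ∫ a in Ioo c x, ∫ b in Ioo a x, F a b :=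
        MeasureTheory.setIntegral_congr_fun measurableSet_Ioo fun a ha => key2 a ha

/-- The hypergeometric kernel composition identity underlying the semigroup property. -/
theorem stmt18 (α β x t : ℝ) (hα : 1/2 < α) (hβ : 0 < β) (ht : 0 < t) (hx : t < x) :
    (Real.Gamma (2*β) * Real.Gamma (2*α))⁻¹ *
      ∫ u in t..x, (x-u)^(2*β-1) * (u-t)^(2*α-1) * u^(-β) * Fg β (1 - x/u) * Fg α (1 - u/t)
    = t^(2*α+β-1) / Real.Gamma (2*(α+β)) * (x/t - 1)^(2*(α+β)-1) * Fg (α+β) (1 - x/t) := by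
  have hα0 : 0 < α := by linarith
  have hγ0 : 0 < α + β := by linarith
  have hΓα := Real.Gamma_pos_of_pos hα0
  have hΓβ := Real.Gamma_pos_of_pos hβ
  have hΓγ := Real.Gamma_pos_of_pos hγ0
  have hΓ2α := Real.Gamma_pos_of_pos (by linarith : (0:ℝ) < 2*α)
  have hΓ2β := Real.Gamma_pos_of_pos (by linarith : (0:ℝ) < 2*β)
  have hΓ2γ := Real.Gamma_pos_of_pos (by linarith : (0:ℝ) < 2*(α+β))
  have hΓαα := Real.Gamma_pos_of_pos (by linarith : (0:ℝ) < α+α)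
  set Bc := Real.Gamma α * Real.Gamma β / Real.Gamma (α+β) with hBc
  set Cα := t^(-α) * (Real.Gamma α * Real.Gamma α / Real.Gamma (α+α)) with hCα
  -- basic facts about Jα
  have hJα_meas : Measurable (fun u => st18J α u t) := by
    have := st18_meas_param (G := fun p : ℝ × ℝ =>
      (p.1-p.2)^(α-1) * (p.2-t)^(α-1) * p.2^(-α)) (by fun_prop) t
    exact this
  have hJα_nonneg : ∀ u, 0 ≤ st18J α u t := by
    intro u
    refine setIntegral_nonneg measurableSet_Ioo fun w hw => ?_
    have h1 : (0:ℝ) ≤ u - w := by linarith [hw.2]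
    have h2 : (0:ℝ) ≤ w - t := by linarith [hw.1]
    have h3 : (0:ℝ) ≤ w := by linarith [hw.1]
    positivity
  have hJα_le : ∀ u, t < u → st18J α u t ≤ Cα * (u-t)^(α+α-1) := by
    intro u hu
    have := st18_conv_le hα0 hα0 hα0.le ht hu
    rw [hCα]; rw [mul_assoc] at this ⊢
    exact this
  -- integrability of (v-u)^(β-1) * Jα u on Ioo t v
  have hg_int : ∀ v, t < v → IntegrableOn (fun u => (v-u)^(β-1) * st18J α u t) (Ioo t v) := by
    intro v hv
    refine Integrable.mono' (g := fun u => (v-u)^(β-1) * (u-t)^(α+α-1) * Cα)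
      ((st18_ii (by linarith : (0:ℝ) < α+α) hβ hv (continuousOn_const (c := Cα))))
      (((by fun_prop : Measurable fun u => (v-u)^(β-1) * st18J α u t)).aestronglyMeasurable)
      ?_
    refine (ae_restrict_iff' measurableSet_Ioo).mpr (ae_of_all _ fun u hu => ?_)
    have h1 : (0:ℝ) ≤ v - u := by linarith [hu.2]
    rw [Real.norm_eq_abs, abs_of_nonneg (mul_nonneg (Real.rpow_nonneg h1 _) (hJα_nonneg u))]
    calc (v-u)^(β-1) * st18J α u t ≤ (v-u)^(β-1) * (Cα * (u-t)^(α+α-1)) :=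
          mul_le_mul_of_nonneg_left (hJα_le u hu.1) (Real.rpow_nonneg h1 _)
      _ = (v-u)^(β-1) * (u-t)^(α+α-1) * Cα := by ring
  -- Part A : reduce LHS to T
  set F1 : ℝ → ℝ → ℝ := fun u v => (x-v)^(β-1) * (v-u)^(β-1) * v^(-β) * st18J α u t with hF1
  have hT1 : ∫ u in Ioo t x, (x-u)^(2*β-1) * (u-t)^(2*α-1) * u^(-β) * Fg β (1-x/u) * Fg α (1-u/t)
      = (Real.Gamma (2*β)/(Real.Gamma β)^2 * (Real.Gamma (2*α)/(Real.Gamma α)^2 * t^α))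
        * ∫ u in Ioo t x, st18J β x u * st18J α u t := by
    rw [← MeasureTheory.integral_const_mul]
    refine setIntegral_congr_fun measurableSet_Ioo fun u hu => ?_
    have hu0 : 0 < u := ht.trans hu.1
    have hxu : (0:ℝ) < x - u := by linarith [hu.2]
    have hut : (0:ℝ) < u - t := by linarith [hu.1]
    rw [st18_Fg_eq hβ hu0 hu.2, st18_Fg_eq hα0 ht hu.1]
    have c1 : (x-u)^(2*β-1) * (x-u)^(1-2*β) = 1 := by
      rw [← Real.rpow_add hxu, show 2*β-1+(1-2*β) = 0 by ring, Real.rpow_zero]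
    have c2 : (u-t)^(2*α-1) * (u-t)^(1-2*α) = 1 := by
      rw [← Real.rpow_add hut, show 2*α-1+(1-2*α) = 0 by ring, Real.rpow_zero]
    have c3 : u^(-β) * u^β = 1 := by
      rw [← Real.rpow_add hu0, neg_add_cancel, Real.rpow_zero]
    calc (x-u)^(2*β-1) * (u-t)^(2*α-1) * u^(-β)
          * (Real.Gamma (2*β)/(Real.Gamma β)^2 * u^β * (x-u)^(1-2*β) * st18J β x u)
          * (Real.Gamma (2*α)/(Real.Gamma α)^2 * t^α * (u-t)^(1-2*α) * st18J α u t)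
        = ((x-u)^(2*β-1) * (x-u)^(1-2*β)) * ((u-t)^(2*α-1) * (u-t)^(1-2*α)) * (u^(-β) * u^β)
          * (Real.Gamma (2*β)/(Real.Gamma β)^2 * (Real.Gamma (2*α)/(Real.Gamma α)^2 * t^α))
          * (st18J β x u * st18J α u t) := by ring
      _ = _ := by rw [c1, c2, c3]; ring
  -- Stage 1 swap
  have hFm1 : Measurable (fun p : ℝ × ℝ => F1 p.1 p.2) := by
    simp only [hF1]; fun_prop
  have h01 : ∀ v ∈ Ioo t x, ∀ u ∈ Ioo t v, 0 ≤ F1 u v := by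
    intro v hv u hu
    simp only [hF1]
    have h1 : (0:ℝ) ≤ x - v := by linarith [hv.2]
    have h2 : (0:ℝ) ≤ v - u := by linarith [hu.2]
    have h3 : (0:ℝ) ≤ v := by linarith [hv.1]
    have := hJα_nonneg u
    positivity
  have hsec1 : ∀ v ∈ Ioo t x, IntegrableOn (fun u => F1 u v) (Ioo t v) := by
    intro v hv
    have h := ((hg_int v hv.1).const_mul ((x-v)^(β-1) * v^(-β)))
    refine MeasureTheory.IntegrableOn.congr_fun h (fun u hu => ?_) measurableSet_Ioo
    simp only [hF1]; ring
  have hpull1 : ∀ v ∈ Ioo t x, ∫ u in Ioo t v, F1 u v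
      = (x-v)^(β-1) * v^(-β) * ∫ u in Ioo t v, (v-u)^(β-1) * st18J α u t := by
    intro v hv
    rw [← MeasureTheory.integral_const_mul]
    refine setIntegral_congr_fun measurableSet_Ioo fun u hu => ?_
    simp only [hF1]; ring
  have hinner_le : ∀ v, t < v → ∫ u in Ioo t v, (v-u)^(β-1) * st18J α u t
      ≤ Cα * (Real.Gamma (α+α) * Real.Gamma β / Real.Gamma (α+α+β)) * (v-t)^(α+α+β-1) := by
    intro v hv
    have hmono := setIntegral_mono_on (hg_int v hv)
      (st18_ii (by linarith : (0:ℝ) < α+α) hβ hv (continuousOn_const (c := Cα)))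
      measurableSet_Ioo (fun u hu => by
        have h1 : (0:ℝ) ≤ v - u := by linarith [hu.2]
        calc (v-u)^(β-1) * st18J α u t ≤ (v-u)^(β-1) * (Cα * (u-t)^(α+α-1)) :=
              mul_le_mul_of_nonneg_left (hJα_le u hu.1) (Real.rpow_nonneg h1 _)
          _ = (v-u)^(β-1) * (u-t)^(α+α-1) * Cα := by ring)
    refine hmono.trans (le_of_eq ?_)
    rw [MeasureTheory.integral_mul_const, st18_beta_conv (by linarith : (0:ℝ) < α+α) hβ hv]
    ring
  have hinner_nonneg : ∀ v, 0 ≤ ∫ u in Ioo t v, (v-u)^(β-1) * st18J α u t := by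
    intro v
    refine setIntegral_nonneg measurableSet_Ioo fun u hu => ?_
    have h1 : (0:ℝ) ≤ v - u := by linarith [hu.2]
    exact mul_nonneg (Real.rpow_nonneg h1 _) (hJα_nonneg u)
  have hout1 : IntegrableOn (fun v => ∫ u in Ioo t v, F1 u v) (Ioo t x) := by
    refine Integrable.mono' (g := fun v => (x-v)^(β-1) * (v-t)^(α+α+β-1)
        * (v^(-β) * (Cα * (Real.Gamma (α+α) * Real.Gamma β / Real.Gamma (α+α+β)))))
      (st18_ii (by linarith : (0:ℝ) < α+α+β) hβ hx
        ((st18_wcont (r := β) ht).mul continuousOn_const))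
      ?_ ?_
    · have := st18_meas_param (G := fun p : ℝ × ℝ => F1 p.2 p.1) (by
        simp only [hF1]; fun_prop) t
      exact this.aestronglyMeasurable
    · refine (ae_restrict_iff' measurableSet_Ioo).mpr (ae_of_all _ fun v hv => ?_)
      have h1 : (0:ℝ) ≤ x - v := by linarith [hv.2]
      have hv0 : 0 < v := ht.trans hv.1
      have hnn : 0 ≤ ∫ u in Ioo t v, F1 u v := by
        rw [hpull1 v hv]
        exact mul_nonneg (mul_nonneg (Real.rpow_nonneg h1 _) (Real.rpow_nonneg hv0.le _))
          (hinner_nonneg v)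
      rw [Real.norm_eq_abs, abs_of_nonneg hnn, hpull1 v hv]
      calc (x-v)^(β-1) * v^(-β) * ∫ u in Ioo t v, (v-u)^(β-1) * st18J α u t
          ≤ (x-v)^(β-1) * v^(-β) * (Cα * (Real.Gamma (α+α) * Real.Gamma β / Real.Gamma (α+α+β))
              * (v-t)^(α+α+β-1)) := by
            refine mul_le_mul_of_nonneg_left (hinner_le v hv.1) ?_
            exact mul_nonneg (Real.rpow_nonneg h1 _) (Real.rpow_nonneg hv0.le _)
        _ = (x-v)^(β-1) * (v-t)^(α+α+β-1)
            * (v^(-β) * (Cα * (Real.Gamma (α+α) * Real.Gamma β / Real.Gamma (α+α+β)))) := by ring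
  have stage1 : ∫ u in Ioo t x, st18J β x u * st18J α u t
      = ∫ v in Ioo t x, ∫ u in Ioo t v, F1 u v := by
    have e : ∫ u in Ioo t x, st18J β x u * st18J α u t
        = ∫ u in Ioo t x, ∫ v in Ioo u x, F1 u v := by
      refine setIntegral_congr_fun measurableSet_Ioo fun u hu => ?_
      rw [show st18J β x u = ∫ v in Ioo u x, (x-v)^(β-1) * (v-u)^(β-1) * v^(-β) from rfl,
        ← MeasureTheory.integral_mul_const]
    rw [e]
    exact (st18_swap F1 hFm1 h01 hsec1 hout1).symm
  -- Stage 2 : inner computation for fixed v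
  have key_inner : ∀ v ∈ Ioo t x, ∫ u in Ioo t v, (v-u)^(β-1) * st18J α u t
      = Bc * (v^(α+β-α) * ∫ s in Ioo t v, (s-t)^(α+β-1) * (v-s)^(α-1) * s^(-(α+β))) := by
    intro v hv
    have hv1 : t < v := hv.1
    have hsec2 : ∀ u ∈ Ioo t v, IntegrableOn
        (fun w => (v-u)^(β-1) * ((u-w)^(α-1) * (w-t)^(α-1) * w^(-α))) (Ioo t u) := by
      intro u hu
      have h := st18_ii hα0 hα0 hu.1 (w := fun w => w^(-α) * (v-u)^(β-1))
        ((st18_wcont ht).mul continuousOn_const)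
      refine MeasureTheory.IntegrableOn.congr_fun h (fun w hw => ?_) measurableSet_Ioo
      ring
    have hout2 : IntegrableOn
        (fun u => ∫ w in Ioo t u, (v-u)^(β-1) * ((u-w)^(α-1) * (w-t)^(α-1) * w^(-α)))
        (Ioo t v) := by
      refine MeasureTheory.Integrable.congr (hg_int v hv1)
        ((ae_restrict_iff' measurableSet_Ioo).mpr (ae_of_all _ fun u hu => ?_))
      show (v-u)^(β-1) * st18J α u t
        = ∫ w in Ioo t u, (v-u)^(β-1) * ((u-w)^(α-1) * (w-t)^(α-1) * w^(-α))
      rw [show st18J α u t = ∫ w in Ioo t u, (u-w)^(α-1) * (w-t)^(α-1) * w^(-α) from rfl,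
        ← MeasureTheory.integral_const_mul]
    have hswap2 := st18_swap (c := t) (x := v)
      (fun w u => (v-u)^(β-1) * ((u-w)^(α-1) * (w-t)^(α-1) * w^(-α)))
      (by fun_prop)
      (fun u hu w hw => by
        have h1 : (0:ℝ) ≤ v - u := by linarith [hu.2]
        have h2 : (0:ℝ) ≤ u - w := by linarith [hw.2]
        have h3 : (0:ℝ) ≤ w - t := by linarith [hw.1]
        have h4 : (0:ℝ) ≤ w := by linarith [hw.1]
        positivity)
      hsec2 hout2
    calc ∫ u in Ioo t v, (v-u)^(β-1) * st18J α u t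
        = ∫ u in Ioo t v, ∫ w in Ioo t u, (v-u)^(β-1) * ((u-w)^(α-1) * (w-t)^(α-1) * w^(-α)) :=
          setIntegral_congr_fun measurableSet_Ioo (fun u hu => by
            rw [show st18J α u t = ∫ w in Ioo t u, (u-w)^(α-1) * (w-t)^(α-1) * w^(-α) from rfl,
              ← MeasureTheory.integral_const_mul])
      _ = ∫ w in Ioo t v, ∫ u in Ioo w v, (v-u)^(β-1) * ((u-w)^(α-1) * (w-t)^(α-1) * w^(-α)) :=
          hswap2
      _ = ∫ w in Ioo t v, (v-w)^(α+β-1) * (w-t)^(α-1) * w^(-α) * Bc :=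
          setIntegral_congr_fun measurableSet_Ioo (fun w hw => by
            calc ∫ u in Ioo w v, (v-u)^(β-1) * ((u-w)^(α-1) * (w-t)^(α-1) * w^(-α))
                = ∫ u in Ioo w v, ((v-u)^(β-1) * (u-w)^(α-1)) * ((w-t)^(α-1) * w^(-α)) :=
                  setIntegral_congr_fun measurableSet_Ioo (fun u hu => by ring)
              _ = (∫ u in Ioo w v, (v-u)^(β-1) * (u-w)^(α-1)) * ((w-t)^(α-1) * w^(-α)) :=
                  MeasureTheory.integral_mul_const _ _
              _ = (v-w)^(α+β-1) * (w-t)^(α-1) * w^(-α) * Bc := by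
                  rw [st18_beta_conv hα0 hβ hw.2, hBc]; ring)
      _ = (∫ w in Ioo t v, (v-w)^(α+β-1) * (w-t)^(α-1) * w^(-α)) * Bc :=
          MeasureTheory.integral_mul_const _ _
      _ = Bc * (v^(α+β-α) * ∫ s in Ioo t v, (s-t)^(α+β-1) * (v-s)^(α-1) * s^(-(α+β))) := by
          rw [st18_invert ht hv1]; ring
  -- combine stages 1 and 2
  have stage2done : ∫ v in Ioo t x, ∫ u in Ioo t v, F1 u v
      = Bc * ∫ v in Ioo t x, ∫ s in Ioo t v,
          (x-v)^(β-1) * ((s-t)^(α+β-1) * (v-s)^(α-1) * s^(-(α+β))) := by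
    rw [← MeasureTheory.integral_const_mul]
    refine setIntegral_congr_fun measurableSet_Ioo fun v hv => ?_
    rw [hpull1 v hv, key_inner v hv]
    have hv0 : 0 < v := ht.trans hv.1
    have cv : v^(-β) * v^(α+β-α) = 1 := by
      rw [← Real.rpow_add hv0, show -β+(α+β-α) = 0 by ring, Real.rpow_zero]
    calc (x-v)^(β-1) * v^(-β) * (Bc * (v^(α+β-α)
            * ∫ s in Ioo t v, (s-t)^(α+β-1) * (v-s)^(α-1) * s^(-(α+β))))
        = (v^(-β) * v^(α+β-α)) * ((x-v)^(β-1)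
            * (Bc * ∫ s in Ioo t v, (s-t)^(α+β-1) * (v-s)^(α-1) * s^(-(α+β)))) := by ring
      _ = Bc * ((x-v)^(β-1) * ∫ s in Ioo t v, (s-t)^(α+β-1) * (v-s)^(α-1) * s^(-(α+β))) := by
          rw [cv]; ring
      _ = Bc * ∫ s in Ioo t v, (x-v)^(β-1) * ((s-t)^(α+β-1) * (v-s)^(α-1) * s^(-(α+β))) := by
          rw [MeasureTheory.integral_const_mul]
  -- Stage 3 swap
  have hPnn : ∀ v, 0 ≤ ∫ s in Ioo t v, (s-t)^(α+β-1) * (v-s)^(α-1) * s^(-(α+β)) := by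
    intro v
    refine setIntegral_nonneg measurableSet_Ioo fun s hs => ?_
    have h1 : (0:ℝ) ≤ s - t := by linarith [hs.1]
    have h2 : (0:ℝ) ≤ v - s := by linarith [hs.2]
    have h3 : (0:ℝ) ≤ s := by linarith [hs.1]
    positivity
  have hPle : ∀ v, t < v → (∫ s in Ioo t v, (s-t)^(α+β-1) * (v-s)^(α-1) * s^(-(α+β)))
      ≤ t^(-(α+β)) * (Real.Gamma (α+β) * Real.Gamma α / Real.Gamma (α+β+α)) * (v-t)^(α+β+α-1) := by
    intro v hv
    have e : ∫ s in Ioo t v, (s-t)^(α+β-1) * (v-s)^(α-1) * s^(-(α+β))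
        = ∫ s in Ioo t v, (v-s)^(α-1) * (s-t)^(α+β-1) * s^(-(α+β)) :=
      setIntegral_congr_fun measurableSet_Ioo (fun s hs => by ring)
    rw [e]
    exact st18_conv_le hγ0 hα0 hγ0.le ht hv
  have hsec3 : ∀ v ∈ Ioo t x, IntegrableOn
      (fun s => (x-v)^(β-1) * ((s-t)^(α+β-1) * (v-s)^(α-1) * s^(-(α+β)))) (Ioo t v) := by
    intro v hv
    have h := st18_ii hγ0 hα0 hv.1 (w := fun s => s^(-(α+β)) * (x-v)^(β-1))
      ((st18_wcont ht).mul continuousOn_const)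
    refine MeasureTheory.IntegrableOn.congr_fun h (fun s hs => ?_) measurableSet_Ioo
    ring
  have hout3 : IntegrableOn (fun v => ∫ s in Ioo t v,
      (x-v)^(β-1) * ((s-t)^(α+β-1) * (v-s)^(α-1) * s^(-(α+β)))) (Ioo t x) := by
    refine Integrable.mono' (g := fun v => (x-v)^(β-1) * (v-t)^(α+β+α-1)
        * (t^(-(α+β)) * (Real.Gamma (α+β) * Real.Gamma α / Real.Gamma (α+β+α))))
      (st18_ii (by linarith : (0:ℝ) < α+β+α) hβ hx continuousOn_const)
      ?_ ?_
    · have := st18_meas_param (G := fun p : ℝ × ℝ =>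
        (x-p.1)^(β-1) * ((p.2-t)^(α+β-1) * (p.1-p.2)^(α-1) * p.2^(-(α+β)))) (by fun_prop) t
      exact this.aestronglyMeasurable
    · refine (ae_restrict_iff' measurableSet_Ioo).mpr (ae_of_all _ fun v hv => ?_)
      have h1 : (0:ℝ) ≤ x - v := by linarith [hv.2]
      have hp : ∫ s in Ioo t v, (x-v)^(β-1) * ((s-t)^(α+β-1) * (v-s)^(α-1) * s^(-(α+β)))
          = (x-v)^(β-1) * ∫ s in Ioo t v, (s-t)^(α+β-1) * (v-s)^(α-1) * s^(-(α+β)) := by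
        rw [MeasureTheory.integral_const_mul]
      rw [hp, Real.norm_eq_abs,
        abs_of_nonneg (mul_nonneg (Real.rpow_nonneg h1 _) (hPnn v))]
      calc (x-v)^(β-1) * ∫ s in Ioo t v, (s-t)^(α+β-1) * (v-s)^(α-1) * s^(-(α+β))
          ≤ (x-v)^(β-1) * (t^(-(α+β)) * (Real.Gamma (α+β) * Real.Gamma α / Real.Gamma (α+β+α))
              * (v-t)^(α+β+α-1)) :=
            mul_le_mul_of_nonneg_left (hPle v hv.1) (Real.rpow_nonneg h1 _)
        _ = (x-v)^(β-1) * (v-t)^(α+β+α-1)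
            * (t^(-(α+β)) * (Real.Gamma (α+β) * Real.Gamma α / Real.Gamma (α+β+α))) := by ring
  have stage3 := st18_swap (c := t) (x := x)
    (fun s v => (x-v)^(β-1) * ((s-t)^(α+β-1) * (v-s)^(α-1) * s^(-(α+β))))
    (by fun_prop)
    (fun v hv s hs => by
      have h1 : (0:ℝ) ≤ x - v := by linarith [hv.2]
      have h2 : (0:ℝ) ≤ s - t := by linarith [hs.1]
      have h3 : (0:ℝ) ≤ v - s := by linarith [hs.2]
      have h4 : (0:ℝ) ≤ s := by linarith [hs.1]
      positivity)
    hsec3 hout3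
  have final3 : ∫ s in Ioo t x, ∫ v in Ioo s x,
      (x-v)^(β-1) * ((s-t)^(α+β-1) * (v-s)^(α-1) * s^(-(α+β)))
      = Bc * st18J (α+β) x t := by
    rw [show st18J (α+β) x t
        = ∫ s in Ioo t x, (x-s)^(α+β-1) * (s-t)^(α+β-1) * s^(-(α+β)) from rfl,
      ← MeasureTheory.integral_const_mul]
    refine setIntegral_congr_fun measurableSet_Ioo fun s hs => ?_
    calc ∫ v in Ioo s x, (x-v)^(β-1) * ((s-t)^(α+β-1) * (v-s)^(α-1) * s^(-(α+β)))
        = ∫ v in Ioo s x, ((x-v)^(β-1) * (v-s)^(α-1)) * ((s-t)^(α+β-1) * s^(-(α+β))) :=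
          setIntegral_congr_fun measurableSet_Ioo (fun v hv => by ring)
      _ = (∫ v in Ioo s x, (x-v)^(β-1) * (v-s)^(α-1)) * ((s-t)^(α+β-1) * s^(-(α+β))) :=
          MeasureTheory.integral_mul_const _ _
      _ = Bc * ((x-s)^(α+β-1) * (s-t)^(α+β-1) * s^(-(α+β))) := by
          rw [st18_beta_conv hα0 hβ hs.2, hBc]; ring
  have Tval : ∫ u in Ioo t x, st18J β x u * st18J α u t = Bc * (Bc * st18J (α+β) x t) := by
    rw [stage1, stage2done, stage3, final3]
  -- final assembly
  rw [intervalIntegral.integral_of_le hx.le, MeasureTheory.integral_Ioc_eq_integral_Ioo,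
    hT1, Tval, st18_Fg_eq hγ0 ht hx]
  have hxt0 : (0:ℝ) < x - t := by linarith
  have e0 : x/t - 1 = (x-t)/t := by field_simp
  rw [e0, Real.div_rpow hxt0.le ht.le]
  have e1 : (x-t)^(2*(α+β)-1) * (x-t)^(1-2*(α+β)) = 1 := by
    rw [← Real.rpow_add hxt0, show 2*(α+β)-1+(1-2*(α+β)) = 0 by ring, Real.rpow_zero]
  have e2 : t^(2*α+β-1) * (t^(2*(α+β)-1))⁻¹ * t^(α+β) = t^α := by
    rw [← Real.rpow_neg ht.le, ← Real.rpow_add ht, ← Real.rpow_add ht,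
      show 2*α+β-1 + -(2*(α+β)-1) + (α+β) = α by ring]
  have hR : t^(2*α+β-1) / Real.Gamma (2*(α+β)) * ((x-t)^(2*(α+β)-1) / t^(2*(α+β)-1))
      * (Real.Gamma (2*(α+β)) / (Real.Gamma (α+β))^2 * t^(α+β) * (x-t)^(1-2*(α+β))
        * st18J (α+β) x t)
      = t^α * st18J (α+β) x t / (Real.Gamma (α+β))^2 := by
    calc t^(2*α+β-1) / Real.Gamma (2*(α+β)) * ((x-t)^(2*(α+β)-1) / t^(2*(α+β)-1))
        * (Real.Gamma (2*(α+β)) / (Real.Gamma (α+β))^2 * t^(α+β) * (x-t)^(1-2*(α+β))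
          * st18J (α+β) x t)
        = (t^(2*α+β-1) * (t^(2*(α+β)-1))⁻¹ * t^(α+β))
          * ((x-t)^(2*(α+β)-1) * (x-t)^(1-2*(α+β)))
          * (Real.Gamma (2*(α+β)) / Real.Gamma (2*(α+β)))
          * st18J (α+β) x t / (Real.Gamma (α+β))^2 := by ring
      _ = _ := by rw [e1, e2, div_self hΓ2γ.ne']; ring
  rw [hR, hBc]
  have n1 := hΓα.ne'
  have n2 := hΓβ.ne'
  have n3 := hΓγ.ne'
  have n4 := hΓ2α.ne'
  have n5 := hΓ2β.ne'
  field_simp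
end

section
/- Let l > 0, α > 0, ν ∈ ℝ with α + ν < 1, and 1 ≤ p ≤ ∞. Then the left-sided Laguerre fractional integral L_{0+}^α is a bounded operator from L_{ν,p}(0,l) to itself, with ‖L_{0+}^α f‖_{ν,p} ≤ C_+ l^α ‖f‖_{ν,p} for every f ∈ L_{ν,p}(0,l), where C_+ = (1/Γ(2α)) ∫₁^∞ (u−1)^{2α−1} u^{ν−1} F_α(1−u) du is finite. -/
open MeasureTheory Set
open scoped ENNReal

/-! ### Change of variables helpers -/

theorem lintegral_cov1d {s : Set ℝ} {f f' : ℝ → ℝ} (hs : MeasurableSet s)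
    (hf' : ∀ x ∈ s, HasDerivWithinAt f (f' x) s x) (hf : Set.InjOn f s) (g : ℝ → ℝ≥0∞) :
    ∫⁻ x in f '' s, g x = ∫⁻ x in s, ENNReal.ofReal |f' x| * g (f x) := by
  simpa only [ContinuousLinearMap.det_toSpanSingleton] using
    lintegral_image_eq_lintegral_abs_det_fderiv_mul volume hs
      (fun x hx => (hf' x hx).hasFDerivWithinAt) hf g

lemma image_div_Ioi_one {x : ℝ} (hx : 0 < x) : (fun t : ℝ => x / t) '' Ioi 1 = Ioo 0 x := by
  ext u
  constructor
  · rintro ⟨t, ht, rfl⟩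
    exact ⟨div_pos hx (lt_trans one_pos ht), div_lt_self hx ht⟩
  · rintro ⟨hu0, hux⟩
    refine ⟨x / u, (one_lt_div hu0).2 hux, ?_⟩
    have hu' : u ≠ 0 := ne_of_gt hu0
    have hx' : x ≠ 0 := ne_of_gt hx
    field_simp

lemma lintegral_Ioo_cov {x : ℝ} (hx : 0 < x) (g : ℝ → ℝ≥0∞) :
    ∫⁻ u in Ioo 0 x, g u = ∫⁻ t in Ioi 1, ENNReal.ofReal (x / t ^ 2) * g (x / t) := by
  have hderiv : ∀ t ∈ Ioi (1:ℝ), HasDerivWithinAt (fun t => x / t) (-(x / t ^ 2)) (Ioi 1) t := by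
    intro t ht
    have ht0 : t ≠ 0 := ne_of_gt (lt_trans one_pos ht)
    have h := ((hasDerivAt_inv ht0).const_mul x).hasDerivWithinAt (s := Ioi 1)
    simpa [div_eq_mul_inv, mul_neg] using h
  have hinj : Set.InjOn (fun t : ℝ => x / t) (Ioi 1) := by
    intro a ha b hb h
    have ha0 : a ≠ 0 := ne_of_gt (lt_trans one_pos ha)
    have hb0 : b ≠ 0 := ne_of_gt (lt_trans one_pos hb)
    have hx' : x ≠ 0 := ne_of_gt hx
    field_simp at h
    linarith
  rw [← image_div_Ioi_one hx, lintegral_cov1d measurableSet_Ioi hderiv hinj g]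
  refine setLIntegral_congr_fun measurableSet_Ioi (fun t ht => ?_)
  have ht0 : (0:ℝ) < t := lt_trans one_pos ht
  rw [abs_neg, abs_of_nonneg (by positivity)]

lemma lintegral_Ioi_scale {c : ℝ} (hc : 0 < c) (g : ℝ → ℝ≥0∞) :
    ∫⁻ u in Ioi 0, g u = ∫⁻ t in Ioi 0, ENNReal.ofReal c * g (c * t) := by
  have himg : (fun t : ℝ => c * t) '' Ioi 0 = Ioi 0 := by
    ext u
    constructor
    · rintro ⟨t, ht, rfl⟩
      exact mul_pos hc ht
    · intro hu
      exact ⟨u / c, div_pos hu hc, by field_simp⟩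
  have hderiv : ∀ t ∈ Ioi (0:ℝ), HasDerivWithinAt (fun t => c * t) c (Ioi 0) t := by
    intro t ht
    simpa using ((hasDerivAt_id t).const_mul c).hasDerivWithinAt (s := Ioi 0)
  have hinj : Set.InjOn (fun t : ℝ => c * t) (Ioi 0) :=
    fun a _ b _ h => mul_left_cancel₀ (ne_of_gt hc) h
  conv_lhs => rw [← himg]
  rw [lintegral_cov1d measurableSet_Ioi hderiv hinj g, abs_of_pos hc]

lemma mulHaar_comp_div {t : ℝ} (ht : 0 < t) (ψ : ℝ → ℝ≥0∞) :
    ∫⁻ x, ψ (x / t) ∂mulHaar = ∫⁻ x, ψ x ∂mulHaar := by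
  have hd : Measurable fun x : ℝ => ENNReal.ofReal x⁻¹ := measurable_inv.ennreal_ofReal
  have hfin : ∀ᵐ x ∂(volume.restrict (Ioi (0:ℝ))), ENNReal.ofReal x⁻¹ < ∞ :=
    ae_of_all _ fun x => ENNReal.ofReal_lt_top
  rw [mulHaar, lintegral_withDensity_eq_lintegral_mul_non_measurable _ hd hfin,
    lintegral_withDensity_eq_lintegral_mul_non_measurable _ hd hfin]
  have hsc := lintegral_Ioi_scale ht
    (fun x => ((fun x : ℝ => ENNReal.ofReal x⁻¹) * fun x => ψ (x / t)) x)
  rw [hsc]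
  refine setLIntegral_congr_fun measurableSet_Ioi (fun y hy => ?_)
  have hy0 : (0:ℝ) < y := hy
  have h1 : t * y / t = y := by field_simp
  have h2 : ENNReal.ofReal t * ENNReal.ofReal (t * y)⁻¹ = ENNReal.ofReal y⁻¹ := by
    rw [← ENNReal.ofReal_mul ht.le]
    congr 1
    field_simp
  simp only [Pi.mul_apply, h1, ← mul_assoc, h2]

lemma mulHaar_restrict_Ioo (l : ℝ) : mulHaar.restrict (Ioo 0 l) = mulHaarI l := by
  rw [mulHaar, mulHaarI, restrict_withDensity measurableSet_Ioo,
    Measure.restrict_restrict measurableSet_Ioo,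
    inter_eq_self_of_subset_left Ioo_subset_Ioi_self]

lemma ae_mulHaarI_iff {l : ℝ} {q : ℝ → Prop} :
    (∀ᵐ x ∂(mulHaarI l), q x) ↔ ∀ᵐ x ∂(volume.restrict (Ioo 0 l)), q x := by
  rw [mulHaarI, ae_withDensity_iff_ae_restrict measurable_inv.ennreal_ofReal]
  have hset : MeasurableSet {x : ℝ | ENNReal.ofReal x⁻¹ ≠ 0} := by
    have : {x : ℝ | ENNReal.ofReal x⁻¹ ≠ 0} =
        (fun x : ℝ => ENNReal.ofReal x⁻¹) ⁻¹' ({0}ᶜ) := rfl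
    rw [this]
    exact measurable_inv.ennreal_ofReal (measurableSet_singleton 0).compl
  rw [Measure.restrict_restrict hset, inter_eq_self_of_subset_right]
  intro x hx
  simp only [mem_setOf_eq, ne_eq, ENNReal.ofReal_eq_zero, not_le]
  exact inv_pos.2 hx.1

/-! ### The scalar identity -/

lemma scalar_id {u t a v : ℝ} (hu : 0 < u) (ht : 1 < t) :
    u / t * (u * t) ^ v * (u * (t - 1)) ^ (2 * a - 1) * u ^ (-a) * u ^ (-v)
      = u ^ a * ((t - 1) ^ (2 * a - 1) * t ^ (v - 1)) := by
  have ht0 : (0:ℝ) < t := lt_trans one_pos ht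
  have ht1 : (0:ℝ) < t - 1 := by linarith
  rw [Real.mul_rpow hu.le ht0.le, Real.mul_rpow hu.le ht1.le,
    show u / t = Real.exp (Real.log u - Real.log t) by
      rw [Real.exp_sub, Real.exp_log hu, Real.exp_log ht0]]
  simp only [Real.rpow_def_of_pos hu, Real.rpow_def_of_pos ht0, Real.rpow_def_of_pos ht1,
    Real.exp_sub, ← Real.exp_add, ← Real.exp_sub]
  rw [Real.exp_eq_exp]
  ring

/-! ### Beta-type integrability and Fg bounds -/

lemma betaIntegrandIntegrable {a b : ℝ} (ha : 0 < a) (hb : 0 < b) :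
    IntegrableOn (fun t : ℝ => t ^ (a - 1) * (1 - t) ^ (b - 1)) (Ioc 0 1) := by
  have h := (Complex.betaIntegral_convergent (u := (a:ℂ)) (v := (b:ℂ))
      (by simpa using ha) (by simpa using hb)).norm
  rw [intervalIntegrable_iff_integrableOn_Ioc_of_le zero_le_one] at h
  refine h.congr_fun ?_ measurableSet_Ioc
  intro t ht
  have ht0 : 0 ≤ t := ht.1.le
  have ht1 : 0 ≤ 1 - t := by linarith [ht.2]
  have e1 : ((t:ℂ)) ^ ((a:ℂ) - 1) = ((t ^ (a - 1) : ℝ) : ℂ) := by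
    rw [show ((a:ℂ) - 1) = ((a - 1 : ℝ) : ℂ) by push_cast; ring, ← Complex.ofReal_cpow ht0]
  have e2 : (1 - (t:ℂ)) ^ ((b:ℂ) - 1) = (((1 - t) ^ (b - 1) : ℝ) : ℂ) := by
    rw [show (1 - (t:ℂ)) = (((1 - t : ℝ)) : ℂ) by push_cast; ring,
      show ((b:ℂ) - 1) = ((b - 1 : ℝ) : ℂ) by push_cast; ring, ← Complex.ofReal_cpow ht1]
  simp only [e1, e2, ← Complex.ofReal_mul, Complex.norm_real]
  rw [Real.norm_of_nonneg (by positivity)]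

lemma Fg_const_nonneg {a : ℝ} (ha : 0 ≤ a) : 0 ≤ Real.Gamma (2*a) / (Real.Gamma a)^2 :=
  div_nonneg (Real.Gamma_nonneg_of_nonneg (by linarith)) (sq_nonneg _)

lemma Fg_nonneg {a z : ℝ} (ha : 0 ≤ a) (hz : z ≤ 0) : 0 ≤ Fg a z := by
  refine mul_nonneg (Fg_const_nonneg ha) ?_
  refine intervalIntegral.integral_nonneg zero_le_one fun t ht => ?_
  have h1 : (0:ℝ) ≤ 1 - z * t := by nlinarith [ht.1, ht.2]
  exact mul_nonneg (mul_nonneg (Real.rpow_nonneg ht.1 _)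
    (Real.rpow_nonneg (by linarith [ht.2] : (0:ℝ) ≤ 1 - t) _)) (Real.rpow_nonneg h1 _)

lemma Fg_measurable (a : ℝ) : Measurable fun z => Fg a z := by
  have h : ∀ z : ℝ, Fg a z = (Real.Gamma (2*a) / (Real.Gamma a)^2) *
      ∫ t in Ioc (0:ℝ) 1, t^(a-1) * (1-t)^(a-1) * (1 - z*t)^(-a) := by
    intro z
    rw [Fg, intervalIntegral.integral_of_le zero_le_one]
  simp_rw [h]
  refine measurable_const.mul ?_
  have hφ : StronglyMeasurable fun p : ℝ × ℝ =>
      p.2 ^ (a-1) * (1-p.2) ^ (a-1) * (1 - p.1 * p.2) ^ (-a) := by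
    refine Measurable.stronglyMeasurable ?_
    exact ((measurable_snd.pow_const _).mul
        ((measurable_const.sub measurable_snd).pow_const _)).mul
      ((measurable_const.sub (measurable_fst.mul measurable_snd)).pow_const _)
  exact (hφ.integral_prod_right' (ν := volume.restrict (Ioc 0 1))).measurable

lemma Fg_le_bound {a b : ℝ} (ha : 0 < a) (hb0 : 0 < b) (hba : b < a) {u : ℝ} (hu : 1 < u) :
    Fg a (1 - u) ≤ (Real.Gamma (2*a) / (Real.Gamma a)^2 *
      ∫ t in Ioc (0:ℝ) 1, t^(a-b-1) * (1-t)^(a-1)) * (u-1)^(-b) := by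
  have hu1 : (0:ℝ) < u - 1 := by linarith
  have hbeta : IntegrableOn (fun t : ℝ => t ^ (a - b - 1) * (1 - t) ^ (a - 1)) (Ioc 0 1) := by
    have := betaIntegrandIntegrable (a := a - b) (b := a) (by linarith) ha
    simpa [sub_sub] using this
  have hbound : ∀ t ∈ Ioc (0:ℝ) 1,
      t^(a-1) * (1-t)^(a-1) * (1 - (1-u)*t)^(-a)
        ≤ (u-1)^(-b) * (t^(a-b-1) * (1-t)^(a-1)) := by
    intro t ht
    have ht0 : 0 < t := ht.1
    have ht1 : (0:ℝ) ≤ 1 - t := by linarith [ht.2]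
    have hs : 0 < (u-1)*t := mul_pos hu1 ht0
    have harg : 1 - (1-u)*t = 1 + (u-1)*t := by ring
    have h1 : ((u-1)*t) ^ (b/a) ≤ 1 + (u-1)*t := by
      rcases le_or_gt ((u-1)*t) 1 with h | h
      · calc ((u-1)*t) ^ (b/a) ≤ 1 := Real.rpow_le_one hs.le h (by positivity)
          _ ≤ 1 + (u-1)*t := by linarith
      · calc ((u-1)*t) ^ (b/a) ≤ ((u-1)*t) ^ (1:ℝ) :=
            Real.rpow_le_rpow_of_exponent_le h.le (by rw [div_le_one ha]; linarith)
          _ = (u-1)*t := Real.rpow_one _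
          _ ≤ 1 + (u-1)*t := by linarith
    have h2 : (1 + (u-1)*t) ^ (-a) ≤ ((u-1)*t) ^ (-b) := by
      have h3 := Real.rpow_le_rpow_of_nonpos (Real.rpow_pos_of_pos hs (b/a)) h1
        (by linarith : -a ≤ 0)
      calc (1 + (u-1)*t) ^ (-a) ≤ (((u-1)*t) ^ (b/a)) ^ (-a) := h3
        _ = ((u-1)*t) ^ (b/a * -a) := by rw [← Real.rpow_mul hs.le]
        _ = ((u-1)*t) ^ (-b) := by
            congr 1
            field_simp
    have h4 : ((u-1)*t) ^ (-b) = (u-1)^(-b) * t^(-b) := Real.mul_rpow hu1.le ht0.le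
    have h5 : t^(a-1) * t^(-b) = t^(a-b-1) := by
      rw [← Real.rpow_add ht0]
      ring_nf
    calc t^(a-1) * (1-t)^(a-1) * (1 - (1-u)*t)^(-a)
        ≤ t^(a-1) * (1-t)^(a-1) * ((u-1)^(-b) * t^(-b)) := by
          rw [harg]
          exact mul_le_mul_of_nonneg_left (h2.trans_eq h4)
            (mul_nonneg (Real.rpow_nonneg ht0.le _) (Real.rpow_nonneg ht1 _))
      _ = (u-1)^(-b) * (t^(a-b-1) * (1-t)^(a-1)) := by
          rw [← h5]; ring
  rw [Fg, intervalIntegral.integral_of_le zero_le_one]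
  have hmeas1 : AEStronglyMeasurable (fun t : ℝ => t^(a-1)*(1-t)^(a-1)*(1-(1-u)*t)^(-a))
      (volume.restrict (Ioc 0 1)) := by
    refine Measurable.aestronglyMeasurable ?_
    exact ((measurable_id.pow_const _).mul ((measurable_const.sub measurable_id).pow_const _)).mul
      ((measurable_const.sub (measurable_const.mul measurable_id)).pow_const _)
  have hint1 : IntegrableOn (fun t : ℝ => t^(a-1)*(1-t)^(a-1)*(1-(1-u)*t)^(-a)) (Ioc 0 1) := by
    refine Integrable.mono (hbeta.const_mul ((u-1)^(-b))) hmeas1 ?_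
    filter_upwards [ae_restrict_mem measurableSet_Ioc] with t ht
    have ht0 : 0 < t := ht.1
    have ht1 : (0:ℝ) ≤ 1 - t := by linarith [ht.2]
    have harg2 : (0:ℝ) ≤ 1 - (1-u)*t := by nlinarith
    rw [Real.norm_of_nonneg (mul_nonneg (mul_nonneg (Real.rpow_nonneg ht0.le _)
        (Real.rpow_nonneg ht1 _)) (Real.rpow_nonneg harg2 _)),
      Real.norm_of_nonneg (mul_nonneg (Real.rpow_nonneg hu1.le _)
        (mul_nonneg (Real.rpow_nonneg ht0.le _) (Real.rpow_nonneg ht1 _)))]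
    exact hbound t ht
  have hmono := setIntegral_mono_on hint1 (hbeta.const_mul ((u-1)^(-b))) measurableSet_Ioc hbound
  rw [integral_const_mul] at hmono
  calc (Real.Gamma (2*a)/(Real.Gamma a)^2) *
        ∫ t in Ioc (0:ℝ) 1, t^(a-1)*(1-t)^(a-1)*(1-(1-u)*t)^(-a)
      ≤ (Real.Gamma (2*a)/(Real.Gamma a)^2) *
        ((u-1)^(-b) * ∫ t in Ioc (0:ℝ) 1, t^(a-b-1)*(1-t)^(a-1)) :=
        mul_le_mul_of_nonneg_left hmono (Fg_const_nonneg ha.le)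
    _ = _ := by ring

lemma kernel_measurable (α ν : ℝ) :
    Measurable fun u : ℝ => (u-1)^(2*α-1) * u^(ν-1) * Fg α (1-u) :=
  (((measurable_id.sub_const 1).pow_const _).mul (measurable_id.pow_const _)).mul
    ((Fg_measurable α).comp (measurable_const.sub measurable_id))

lemma kernel_integrable {α ν : ℝ} (hα : 0 < α) (hαν : α + ν < 1) :
    IntegrableOn (fun u => (u-1)^(2*α-1) * u^(ν-1) * Fg α (1-u)) (Ioi 1) volume := by
  set β := max (α/2) ((3*α+ν-1)/2) with hβ
  have hb0 : 0 < β := lt_of_lt_of_le (by linarith) (le_max_left _ _)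
  have hba : β < α := max_lt (by linarith) (by linarith)
  have hb2 : 2*α+ν-1 < β := lt_of_lt_of_le (by linarith) (le_max_right _ _)
  have he : (-1:ℝ) < 2*α-1-β := by linarith
  have he2 : 2*α-1-β + (ν-1) < -1 := by linarith
  set B := Real.Gamma (2*α)/(Real.Gamma α)^2 * ∫ t in Ioc (0:ℝ) 1, t^(α-β-1)*(1-t)^(α-1)
    with hB
  have hB0 : 0 ≤ B := by
    refine mul_nonneg (Fg_const_nonneg hα.le) (setIntegral_nonneg measurableSet_Ioc ?_)
    intro t ht
    exact mul_nonneg (Real.rpow_nonneg ht.1.le _)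
      (Real.rpow_nonneg (by linarith [ht.2] : (0:ℝ) ≤ 1 - t) _)
  -- majorant m u = B * ((u-1)^(2α-1-β) * u^(ν-1))
  have hm_meas : Measurable fun u : ℝ => B * ((u-1)^(2*α-1-β) * u^(ν-1)) :=
    measurable_const.mul (((measurable_id.sub_const 1).pow_const _).mul
      (measurable_id.pow_const _))
  have hm12 : IntegrableOn (fun u : ℝ => B * ((u-1)^(2*α-1-β) * u^(ν-1))) (Ioc 1 2) := by
    set c2 := max 1 ((2:ℝ)^(ν-1)) with hc2
    have hbase : IntegrableOn (fun u : ℝ => (u-1)^(2*α-1-β)) (Ioc 1 2) := by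
      have h1 : IntervalIntegrable (fun v : ℝ => v ^ (2*α-1-β)) volume 0 1 :=
        intervalIntegral.intervalIntegrable_rpow' he
      have h2 := h1.comp_sub_right 1
      rw [intervalIntegrable_iff_integrableOn_Ioc_of_le (by norm_num)] at h2
      norm_num at h2
      exact h2
    refine Integrable.mono (hbase.const_mul (B * c2))
      hm_meas.aestronglyMeasurable ?_
    filter_upwards [ae_restrict_mem measurableSet_Ioc] with u hu
    have hu1 : (0:ℝ) ≤ u - 1 := by linarith [hu.1]
    have hu0 : (0:ℝ) < u := by linarith [hu.1]
    have huc : u ^ (ν-1) ≤ c2 := by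
      rcases le_or_gt 0 (ν-1) with h | h
      · exact le_trans (Real.rpow_le_rpow hu0.le hu.2 h) (le_max_right _ _)
      · refine le_trans ?_ (le_max_left _ _)
        have := Real.rpow_le_rpow_of_nonpos hu0 (le_refl u) h.le
        calc u ^ (ν-1) ≤ 1 ^ (ν-1) :=
              Real.rpow_le_rpow_of_nonpos one_pos hu.1.le h.le
          _ = 1 := Real.one_rpow _
    rw [Real.norm_of_nonneg (mul_nonneg hB0 (mul_nonneg (Real.rpow_nonneg hu1 _)
        (Real.rpow_nonneg hu0.le _))),
      Real.norm_of_nonneg (mul_nonneg (mul_nonneg hB0 (le_trans zero_le_one (le_max_left _ _)))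
        (Real.rpow_nonneg hu1 _))]
    calc B * ((u-1)^(2*α-1-β) * u^(ν-1)) ≤ B * ((u-1)^(2*α-1-β) * c2) := by
          refine mul_le_mul_of_nonneg_left ?_ hB0
          exact mul_le_mul_of_nonneg_left huc (Real.rpow_nonneg hu1 _)
      _ = B * c2 * (u-1)^(2*α-1-β) := by ring
  have hm2i : IntegrableOn (fun u : ℝ => B * ((u-1)^(2*α-1-β) * u^(ν-1))) (Ioi 2) := by
    set c3 := max 1 ((2:ℝ)^(β+1-2*α)) with hc3
    have hc30 : (0:ℝ) ≤ c3 := le_trans zero_le_one (le_max_left _ _)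
    have hbase : IntegrableOn (fun u : ℝ => u ^ (2*α-1-β+(ν-1))) (Ioi 2) :=
      integrableOn_Ioi_rpow_of_lt he2 (by norm_num)
    refine Integrable.mono (hbase.const_mul (B * c3)) hm_meas.aestronglyMeasurable ?_
    filter_upwards [ae_restrict_mem measurableSet_Ioi] with u hu
    have hu2 : (2:ℝ) < u := hu
    have hu0 : (0:ℝ) < u := by linarith
    have hu1 : (0:ℝ) < u - 1 := by linarith
    have hkey : (u-1)^(2*α-1-β) ≤ c3 * u^(2*α-1-β) := by
      rcases le_or_gt 0 (2*α-1-β) with h | h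
      · calc (u-1)^(2*α-1-β) ≤ u^(2*α-1-β) := Real.rpow_le_rpow hu1.le (by linarith) h
          _ ≤ c3 * u^(2*α-1-β) := by
            nlinarith [Real.rpow_nonneg hu0.le (2*α-1-β), le_max_left (1:ℝ) ((2:ℝ)^(β+1-2*α))]
      · have hud : u/2 ≤ u - 1 := by linarith
        have h1 : (u-1)^(2*α-1-β) ≤ (u/2)^(2*α-1-β) :=
          Real.rpow_le_rpow_of_nonpos (by linarith) hud h.le
        have h2 : (u/2)^(2*α-1-β) = u^(2*α-1-β) * ((2:ℝ)^(β+1-2*α)) := by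
          rw [Real.div_rpow hu0.le (by norm_num : (0:ℝ) ≤ 2),
            div_eq_mul_inv, ← Real.rpow_neg (by norm_num : (0:ℝ) ≤ 2)]
          congr 2
          ring
        calc (u-1)^(2*α-1-β) ≤ u^(2*α-1-β) * ((2:ℝ)^(β+1-2*α)) := h1.trans_eq h2
          _ ≤ c3 * u^(2*α-1-β) := by
            rw [mul_comm]
            exact mul_le_mul_of_nonneg_right (le_max_right _ _)
              (Real.rpow_nonneg hu0.le _)
    rw [Real.norm_of_nonneg (mul_nonneg hB0 (mul_nonneg (Real.rpow_nonneg hu1.le _)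
        (Real.rpow_nonneg hu0.le _))),
      Real.norm_of_nonneg (mul_nonneg (mul_nonneg hB0 hc30) (Real.rpow_nonneg hu0.le _))]
    calc B * ((u-1)^(2*α-1-β) * u^(ν-1))
        ≤ B * ((c3 * u^(2*α-1-β)) * u^(ν-1)) := by
          refine mul_le_mul_of_nonneg_left ?_ hB0
          exact mul_le_mul_of_nonneg_right hkey (Real.rpow_nonneg hu0.le _)
      _ = B * c3 * (u^(2*α-1-β) * u^(ν-1)) := by ring
      _ = B * c3 * u^(2*α-1-β+(ν-1)) := by rw [← Real.rpow_add hu0]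
  have hmI : IntegrableOn (fun u : ℝ => B * ((u-1)^(2*α-1-β) * u^(ν-1))) (Ioi 1) := by
    have : Ioc (1:ℝ) 2 ∪ Ioi 2 = Ioi 1 := Ioc_union_Ioi_eq_Ioi (by norm_num)
    rw [← this]
    exact hm12.union hm2i
  refine Integrable.mono hmI (kernel_measurable α ν).aestronglyMeasurable ?_
  filter_upwards [ae_restrict_mem measurableSet_Ioi] with u hu
  have hu1 : (1:ℝ) < u := hu
  have hu0 : (0:ℝ) < u := by linarith
  have hum : (0:ℝ) < u - 1 := by linarith
  have hFg0 : 0 ≤ Fg α (1-u) := Fg_nonneg hα.le (by linarith)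
  have hK0 : 0 ≤ (u-1)^(2*α-1) * u^(ν-1) * Fg α (1-u) :=
    mul_nonneg (mul_nonneg (Real.rpow_nonneg hum.le _) (Real.rpow_nonneg hu0.le _)) hFg0
  rw [Real.norm_of_nonneg hK0,
    Real.norm_of_nonneg (mul_nonneg hB0 (mul_nonneg (Real.rpow_nonneg hum.le _)
      (Real.rpow_nonneg hu0.le _)))]
  calc (u-1)^(2*α-1) * u^(ν-1) * Fg α (1-u)
      ≤ (u-1)^(2*α-1) * u^(ν-1) * (B * (u-1)^(-β)) := by
        refine mul_le_mul_of_nonneg_left (Fg_le_bound hα hb0 hba hu1) ?_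
        exact mul_nonneg (Real.rpow_nonneg hum.le _) (Real.rpow_nonneg hu0.le _)
    _ = B * (((u-1)^(2*α-1) * (u-1)^(-β)) * u^(ν-1)) := by ring
    _ = B * ((u-1)^(2*α-1-β) * u^(ν-1)) := by
        rw [← Real.rpow_add hum]
        ring_nf

lemma lintegral_pow_le {θ : Measure ℝ} {ψ : ℝ → ℝ≥0∞} (hψ : AEMeasurable ψ θ) {r : ℝ}
    (hr : 1 ≤ r) :
    (∫⁻ t, ψ t ∂θ) ^ r ≤ (θ univ) ^ (r - 1) * ∫⁻ t, ψ t ^ r ∂θ := by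
  rcases eq_or_lt_of_le hr with h | h
  · simp [← h]
  · have hr0 : (0:ℝ) < r := by linarith
    have hrm : r - 1 ≠ 0 := by intro h'; rw [sub_eq_zero] at h'; exact h.ne h'.symm
    have hq : Real.HolderConjugate r (r/(r-1)) := Real.HolderConjugate.conjExponent h
    have hH := ENNReal.lintegral_mul_le_Lp_mul_Lq θ hq hψ
      (aemeasurable_const (b := (1:ℝ≥0∞)))
    simp only [Pi.mul_apply, Pi.one_apply, mul_one, ENNReal.one_rpow, lintegral_one] at hH
    have h2 := ENNReal.rpow_le_rpow hH hr0.le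
    rw [ENNReal.mul_rpow_of_nonneg _ _ hr0.le, ← ENNReal.rpow_mul, ← ENNReal.rpow_mul,
      one_div, inv_mul_cancel₀ hr0.ne', ENNReal.rpow_one] at h2
    have he : 1 / (r/(r-1)) * r = r - 1 := by
      rw [one_div, inv_div]
      field_simp
    rw [he] at h2
    calc (∫⁻ t, ψ t ∂θ) ^ r ≤ (∫⁻ t, ψ t ^ r ∂θ) * (θ univ) ^ (r-1) := h2
      _ = (θ univ) ^ (r - 1) * ∫⁻ t, ψ t ^ r ∂θ := mul_comm _ _

set_option maxHeartbeats 1000000 in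
/-- Boundedness of the left-sided Laguerre fractional integral on `L_{ν,p}(0,l)`. -/
theorem stmt19 (l : ℝ) (hl : 0 < l) (α ν : ℝ) (hα : 0 < α) (hαν : α + ν < 1)
    (p : ℝ≥0∞) (hp : 1 ≤ p) :
    IntegrableOn (fun u => (u-1)^(2*α-1) * u^(ν-1) * Fg α (1-u)) (Set.Ioi 1) volume ∧
    ∀ f : ℝ → ℝ, memLnuI l ν p f →
      nuNormI l ν p (Lplus α f) ≤
        ENNReal.ofReal (((Real.Gamma (2*α))⁻¹ *
          ∫ u in Set.Ioi (1:ℝ), (u-1)^(2*α-1) * u^(ν-1) * Fg α (1-u)) * l^α) *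
        nuNormI l ν p f := by
  have hKint := kernel_integrable hα hαν
  refine ⟨hKint, ?_⟩
  intro f hf
  set Kt : ℝ → ℝ := fun t => (t-1)^(2*α-1) * t^(ν-1) * Fg α (1-t) with hKt
  have hKtm : Measurable Kt := kernel_measurable α ν
  have hKtnn : ∀ t ∈ Ioi (1:ℝ), 0 ≤ Kt t := by
    intro t ht
    have ht1 : (1:ℝ) < t := ht
    exact mul_nonneg (mul_nonneg (Real.rpow_nonneg (by linarith) _)
      (Real.rpow_nonneg (by linarith) _)) (Fg_nonneg hα.le (by linarith))
  set κ : ℝ≥0∞ := ∫⁻ t in Ioi 1, ENNReal.ofReal (Kt t) with hκdef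
  have hκ_eq : ENNReal.ofReal (∫ t in Ioi (1:ℝ), Kt t) = κ := by
    refine ofReal_integral_eq_lintegral_ofReal hKint ?_
    filter_upwards [ae_restrict_mem measurableSet_Ioi] with t ht
    exact hKtnn t ht
  have hκ_ne : κ ≠ ∞ := by rw [← hκ_eq]; exact ENNReal.ofReal_ne_top
  have hΓpos : 0 < Real.Gamma (2*α) := Real.Gamma_pos_of_pos (by linarith)
  have hΓi0 : 0 ≤ (Real.Gamma (2*α))⁻¹ := by positivity
  set A : ℝ≥0∞ := ENNReal.ofReal ((Real.Gamma (2*α))⁻¹) * ENNReal.ofReal (l ^ α) with hA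
  have hA_ne : A ≠ ∞ := ENNReal.mul_ne_top ENNReal.ofReal_ne_top ENNReal.ofReal_ne_top
  have hCeq : ENNReal.ofReal (((Real.Gamma (2*α))⁻¹ * ∫ u in Ioi (1:ℝ), Kt u) * l^α)
      = A * κ := by
    rw [ENNReal.ofReal_mul (mul_nonneg hΓi0 (setIntegral_nonneg measurableSet_Ioi hKtnn)),
      ENNReal.ofReal_mul hΓi0, hκ_eq, hA]
    ring
  -- measurable representative of x^ν f
  have hg : AEStronglyMeasurable (fun x => x ^ ν * f x) (mulHaarI l) := hf.1
  set g₀ : ℝ → ℝ := AEStronglyMeasurable.mk _ hg with hg₀def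
  have hg₀m : Measurable g₀ := hg.stronglyMeasurable_mk.measurable
  have hgg : (fun x => x ^ ν * f x) =ᵐ[mulHaarI l] g₀ := hg.ae_eq_mk
  have hgg' : ∀ᵐ u ∂(volume.restrict (Ioo 0 l)), u ^ ν * f u = g₀ u := ae_mulHaarI_iff.mp hgg
  have hfae : ∀ᵐ u ∂(volume.restrict (Ioo 0 l)), f u = u ^ (-ν) * g₀ u := by
    filter_upwards [hgg', ae_restrict_mem measurableSet_Ioo] with u h1 h2
    have hu0 : 0 < u := h2.1
    rw [← h1, ← mul_assoc, ← Real.rpow_add hu0]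
    simp
  set G : ℝ → ℝ≥0∞ := (Ioo 0 l).indicator (fun u => (‖g₀ u‖₊ : ℝ≥0∞)) with hG
  have hGm : Measurable G :=
    (measurable_coe_nnreal_ennreal.comp hg₀m.nnnorm).indicator measurableSet_Ioo
  set Φ : ℝ → ℝ≥0∞ := fun x => ∫⁻ t in Ioi 1, ENNReal.ofReal (Kt t) * G (x / t) with hΦ
  -- Step A : pointwise bound
  have stepA : ∀ x ∈ Ioo 0 l, (‖x ^ ν * Lplus α f x‖₊ : ℝ≥0∞) ≤ A * Φ x := by
    intro x hx
    have hx0 : 0 < x := hx.1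
    have hxl : x < l := hx.2
    have h1 : (‖x ^ ν * Lplus α f x‖₊ : ℝ≥0∞)
        ≤ ENNReal.ofReal ((Real.Gamma (2*α))⁻¹) *
          ∫⁻ u in Ioo 0 x, ENNReal.ofReal (x ^ ν) *
            (‖(x-u)^(2*α-1) * u^(-α) * Fg α (1 - x/u) * f u‖₊ : ℝ≥0∞) := by
      rw [show Lplus α f x = (Real.Gamma (2*α))⁻¹ *
          ∫ u in Ioo (0:ℝ) x, (x-u)^(2*α-1) * u^(-α) * Fg α (1 - x/u) * f u from rfl]
      calc (‖x ^ ν * ((Real.Gamma (2*α))⁻¹ *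
              ∫ u in Ioo (0:ℝ) x, (x-u)^(2*α-1) * u^(-α) * Fg α (1 - x/u) * f u)‖₊ : ℝ≥0∞)
          = ENNReal.ofReal (x ^ ν) * (ENNReal.ofReal ((Real.Gamma (2*α))⁻¹) *
            (‖∫ u in Ioo (0:ℝ) x, (x-u)^(2*α-1) * u^(-α) * Fg α (1 - x/u) * f u‖₊ : ℝ≥0∞)) := by
            rw [nnnorm_mul, nnnorm_mul, ENNReal.coe_mul, ENNReal.coe_mul,
              (enorm_eq_nnnorm _).symm.trans (Real.enorm_eq_ofReal (Real.rpow_nonneg hx0.le ν)),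
              (enorm_eq_nnnorm _).symm.trans (Real.enorm_eq_ofReal hΓi0)]
        _ ≤ ENNReal.ofReal (x ^ ν) * (ENNReal.ofReal ((Real.Gamma (2*α))⁻¹) *
            ∫⁻ u in Ioo (0:ℝ) x,
              (‖(x-u)^(2*α-1) * u^(-α) * Fg α (1 - x/u) * f u‖₊ : ℝ≥0∞)) := by
            refine mul_le_mul_right (mul_le_mul_right ?_ _) _
            exact enorm_integral_le_lintegral_enorm _
        _ = ENNReal.ofReal ((Real.Gamma (2*α))⁻¹) * (ENNReal.ofReal (x ^ ν) *
            ∫⁻ u in Ioo (0:ℝ) x,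
              (‖(x-u)^(2*α-1) * u^(-α) * Fg α (1 - x/u) * f u‖₊ : ℝ≥0∞)) := by ring
        _ = _ := by rw [← lintegral_const_mul' _ _ ENNReal.ofReal_ne_top]
    refine h1.trans ?_
    have hae_x : ∀ᵐ u ∂(volume.restrict (Ioo 0 x)), f u = u ^ (-ν) * g₀ u :=
      ae_restrict_of_ae_restrict_of_subset (Ioo_subset_Ioo_right hxl.le) hfae
    have h2 : (∫⁻ u in Ioo 0 x, ENNReal.ofReal (x ^ ν) *
          (‖(x-u)^(2*α-1) * u^(-α) * Fg α (1 - x/u) * f u‖₊ : ℝ≥0∞))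
        = ∫⁻ u in Ioo 0 x, ENNReal.ofReal (x ^ ν) *
            (‖(x-u)^(2*α-1) * u^(-α) * Fg α (1 - x/u) * (u ^ (-ν) * g₀ u)‖₊ : ℝ≥0∞) := by
      refine lintegral_congr_ae ?_
      filter_upwards [hae_x] with u hu
      rw [hu]
    rw [h2, lintegral_Ioo_cov hx0]
    have h3 : ∀ t ∈ Ioi (1:ℝ),
        ENNReal.ofReal (x / t^2) * (ENNReal.ofReal (x ^ ν) *
          (‖(x - x/t)^(2*α-1) * (x/t)^(-α) * Fg α (1 - x/(x/t)) *
            ((x/t) ^ (-ν) * g₀ (x/t))‖₊ : ℝ≥0∞))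
        ≤ ENNReal.ofReal (l ^ α) * (ENNReal.ofReal (Kt t) * G (x / t)) := by
      intro t ht
      have ht1 : (1:ℝ) < t := ht
      have ht0 : (0:ℝ) < t := by linarith
      have hu0 : 0 < x / t := div_pos hx0 ht0
      have hul : x / t < l := lt_trans (div_lt_self hx0 ht1) hxl
      have hxt : x / (x / t) = t := by
        rw [div_div_eq_mul_div, mul_comm, mul_div_assoc, div_self (ne_of_gt hx0), mul_one]
      have hxu : x - x / t = (x/t) * (t - 1) := by field_simp
      have hx_eq : x = (x/t) * t := by field_simp
      have hxmu0 : (0:ℝ) ≤ x - x/t := by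
        rw [hxu]; exact mul_nonneg hu0.le (by linarith)
      have hFg0 : 0 ≤ Fg α (1 - t) := Fg_nonneg hα.le (by linarith)
      have hP : (0:ℝ) ≤ (x - x/t)^(2*α-1) * (x/t)^(-α) * Fg α (1-t) * (x/t)^(-ν) :=
        mul_nonneg (mul_nonneg (mul_nonneg (Real.rpow_nonneg hxmu0 _)
          (Real.rpow_nonneg hu0.le _)) hFg0) (Real.rpow_nonneg hu0.le _)
      rw [hxt, show (x - x/t)^(2*α-1) * (x/t)^(-α) * Fg α (1 - t) * ((x/t) ^ (-ν) * g₀ (x/t))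
          = ((x - x/t)^(2*α-1) * (x/t)^(-α) * Fg α (1-t) * (x/t)^(-ν)) * g₀ (x/t) from by ring,
        nnnorm_mul, ENNReal.coe_mul, (enorm_eq_nnnorm _).symm.trans (Real.enorm_eq_ofReal hP), ← mul_assoc, ← mul_assoc,
        ← ENNReal.ofReal_mul (by positivity), ← ENNReal.ofReal_mul (by positivity)]
      have hs_le : x / t^2 * x^ν *
          ((x - x/t)^(2*α-1) * (x/t)^(-α) * Fg α (1-t) * (x/t)^(-ν)) ≤ l^α * Kt t := by
        have hid := scalar_id (u := x/t) (t := t) (a := α) (v := ν) hu0 ht1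
        have e0 : x / t^2 = (x/t)/t := by
          rw [div_div]; ring_nf
        calc x / t^2 * x^ν * ((x - x/t)^(2*α-1) * (x/t)^(-α) * Fg α (1-t) * (x/t)^(-ν))
            = ((x/t)/t * ((x/t)*t)^ν * ((x/t)*(t-1))^(2*α-1) * (x/t)^(-α) * (x/t)^(-ν)) *
              Fg α (1-t) := by
              rw [← e0, ← hx_eq, ← hxu]; ring
          _ = ((x/t)^α * ((t-1)^(2*α-1) * t^(ν-1))) * Fg α (1-t) := by rw [hid]
          _ = (x/t)^α * Kt t := by rw [hKt]; ring
          _ ≤ l^α * Kt t := by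
              refine mul_le_mul_of_nonneg_right ?_ (hKtnn t ht)
              exact Real.rpow_le_rpow hu0.le hul.le hα.le
      have hGu : G (x/t) = (‖g₀ (x/t)‖₊ : ℝ≥0∞) :=
        indicator_of_mem (show x/t ∈ Ioo 0 l from ⟨hu0, hul⟩) _
      calc ENNReal.ofReal (x / t^2 * x^ν *
            ((x - x/t)^(2*α-1) * (x/t)^(-α) * Fg α (1-t) * (x/t)^(-ν))) * (‖g₀ (x/t)‖₊ : ℝ≥0∞)
          ≤ ENNReal.ofReal (l^α * Kt t) * G (x/t) := by
            rw [hGu]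
            exact mul_le_mul_left (ENNReal.ofReal_le_ofReal hs_le) _
        _ = ENNReal.ofReal (l^α) * (ENNReal.ofReal (Kt t) * G (x/t)) := by
            rw [ENNReal.ofReal_mul (Real.rpow_nonneg hl.le α), mul_assoc]
    have h4 : (∫⁻ t in Ioi 1, ENNReal.ofReal (x / t^2) * (ENNReal.ofReal (x ^ ν) *
          (‖(x - x/t)^(2*α-1) * (x/t)^(-α) * Fg α (1 - x/(x/t)) *
            ((x/t) ^ (-ν) * g₀ (x/t))‖₊ : ℝ≥0∞)))
        ≤ ENNReal.ofReal (l ^ α) * Φ x := by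
      calc (∫⁻ t in Ioi 1, ENNReal.ofReal (x / t^2) * (ENNReal.ofReal (x ^ ν) *
            (‖(x - x/t)^(2*α-1) * (x/t)^(-α) * Fg α (1 - x/(x/t)) *
              ((x/t) ^ (-ν) * g₀ (x/t))‖₊ : ℝ≥0∞)))
          ≤ ∫⁻ t in Ioi 1, ENNReal.ofReal (l ^ α) * (ENNReal.ofReal (Kt t) * G (x / t)) := by
            refine lintegral_mono_ae ?_
            filter_upwards [ae_restrict_mem measurableSet_Ioi] with t ht
            exact h3 t ht
        _ = ENNReal.ofReal (l ^ α) * Φ x := by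
            rw [lintegral_const_mul' _ _ ENNReal.ofReal_ne_top]
    calc ENNReal.ofReal ((Real.Gamma (2*α))⁻¹) * ∫⁻ t in Ioi 1,
          ENNReal.ofReal (x / t^2) * (ENNReal.ofReal (x ^ ν) *
          (‖(x - x/t)^(2*α-1) * (x/t)^(-α) * Fg α (1 - x/(x/t)) *
            ((x/t) ^ (-ν) * g₀ (x/t))‖₊ : ℝ≥0∞))
        ≤ ENNReal.ofReal ((Real.Gamma (2*α))⁻¹) * (ENNReal.ofReal (l ^ α) * Φ x) :=
          mul_le_mul_right h4 _
      _ = A * Φ x := by rw [hA, mul_assoc]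
  have hbound_ae : ∀ᵐ x ∂(mulHaarI l), (‖x ^ ν * Lplus α f x‖₊ : ℝ≥0∞) ≤ A * Φ x := by
    rw [ae_mulHaarI_iff]
    filter_upwards [ae_restrict_mem measurableSet_Ioo] with x hx
    exact stepA x hx
  rcases eq_or_ne p ∞ with hptop | hptop
  · -- p = ∞
    subst hptop
    set M := eLpNorm (fun x => x ^ ν * f x) ∞ (mulHaarI l) with hM
    have hM_ne : M ≠ ∞ := hf.2.ne
    have hGM : ∀ᵐ u ∂(volume : Measure ℝ), G u ≤ M := by
      have h1 : ∀ᵐ u ∂(mulHaarI l), (‖u ^ ν * f u‖₊ : ℝ≥0∞) ≤ M := by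
        rw [hM, eLpNorm_exponent_top]
        exact enorm_ae_le_eLpNormEssSup _ _
      have h2 : ∀ᵐ u ∂(volume.restrict (Ioo 0 l)), G u ≤ M := by
        filter_upwards [ae_mulHaarI_iff.mp h1, hgg', ae_restrict_mem measurableSet_Ioo]
          with u hu1 hu2 hu3
        rw [hG, indicator_of_mem hu3, ← hu2]
        exact hu1
      rw [ae_restrict_iff' measurableSet_Ioo] at h2
      filter_upwards [h2] with u hu
      by_cases h : u ∈ Ioo 0 l
      · exact hu h
      · rw [hG, indicator_of_notMem h]; exact zero_le
    set S := {u : ℝ | ¬ G u ≤ M} with hS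
    have hSm : MeasurableSet S := by
      have hSeq : S = {u : ℝ | M < G u} := by ext u; simp [hS, not_le]
      rw [hSeq]
      exact measurableSet_lt measurable_const hGm
    have hS0 : volume S = 0 := ae_iff.mp hGM
    have hΦM : ∀ x : ℝ, 0 < x → Φ x ≤ κ * M := by
      intro x hx0
      have hnull : ∀ᵐ t ∂(volume.restrict (Ioi (1:ℝ))), G (x / t) ≤ M := by
        have h0 : ∫⁻ t in Ioi 1, ENNReal.ofReal (x / t^2) *
            S.indicator (fun _ => (1:ℝ≥0∞)) (x / t) = 0 := by
          rw [← lintegral_Ioo_cov hx0]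
          refine le_antisymm (le_trans (setLIntegral_le_lintegral _ _) (le_of_eq ?_)) zero_le
          rw [lintegral_indicator hSm]
          simp [hS0]
        have hmeas : Measurable fun t : ℝ => ENNReal.ofReal (x / t^2) *
            S.indicator (fun _ => (1:ℝ≥0∞)) (x / t) :=
          ((measurable_const.div (measurable_id.pow_const 2)).ennreal_ofReal).mul
            ((measurable_one.indicator hSm).comp (measurable_const.div measurable_id))
        have h1 := (lintegral_eq_zero_iff hmeas).mp h0
        filter_upwards [h1, ae_restrict_mem measurableSet_Ioi] with t ht1 ht2
        have ht0 : (0:ℝ) < t := lt_trans one_pos ht2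
        have hpos : ENNReal.ofReal (x / t^2) ≠ 0 := by
          simp only [ne_eq, ENNReal.ofReal_eq_zero, not_le]
          positivity
        rcases mul_eq_zero.mp ht1 with h | h
        · exact absurd h hpos
        · by_contra hcon
          have hmem : x/t ∈ S := hcon
          rw [indicator_of_mem hmem] at h
          exact one_ne_zero h
      calc Φ x ≤ ∫⁻ t in Ioi 1, ENNReal.ofReal (Kt t) * M := by
            refine lintegral_mono_ae ?_
            filter_upwards [hnull] with t ht
            exact mul_le_mul_right ht _
        _ = κ * M := lintegral_mul_const' M _ hM_ne
    have hfinal : ∀ᵐ x ∂(mulHaarI l), (‖x ^ ν * Lplus α f x‖₊ : ℝ≥0∞) ≤ A * (κ * M) := by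
      rw [ae_mulHaarI_iff]
      filter_upwards [ae_restrict_mem measurableSet_Ioo] with x hx
      exact le_trans (stepA x hx) (mul_le_mul_right (hΦM x hx.1) _)
    have hLHS : nuNormI l ν ∞ (Lplus α f)
        = essSup (fun x => (‖x ^ ν * Lplus α f x‖₊ : ℝ≥0∞)) (mulHaarI l) := by
      rw [show nuNormI l ν ∞ (Lplus α f)
          = eLpNorm (fun x => x ^ ν * Lplus α f x) ∞ (mulHaarI l) from rfl,
        eLpNorm_exponent_top, eLpNormEssSup]
      rfl
    calc nuNormI l ν ∞ (Lplus α f)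
        = essSup (fun x => (‖x ^ ν * Lplus α f x‖₊ : ℝ≥0∞)) (mulHaarI l) := hLHS
      _ ≤ A * (κ * M) := essSup_le_of_ae_le _ hfinal
      _ = (A * κ) * M := by ring
      _ = ENNReal.ofReal (((Real.Gamma (2*α))⁻¹ * ∫ u in Ioi (1:ℝ), Kt u) * l^α) *
            nuNormI l ν ∞ f := by rw [hCeq]; rfl
  · -- p ≠ ∞
    have hp0 : p ≠ 0 := ne_of_gt (lt_of_lt_of_le zero_lt_one hp)
    set r := p.toReal with hr
    have hr1 : 1 ≤ r := by
      rw [hr, ← ENNReal.toReal_one]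
      exact ENNReal.toReal_mono hptop hp
    have hr0 : (0:ℝ) < r := lt_of_lt_of_le one_pos hr1
    have hLHS : nuNormI l ν p (Lplus α f)
        = (∫⁻ x, (‖x ^ ν * Lplus α f x‖₊ : ℝ≥0∞) ^ r ∂(mulHaarI l)) ^ (1/r) :=
      eLpNorm_eq_lintegral_rpow_enorm_toReal hp0 hptop
    have hRHS : nuNormI l ν p f
        = (∫⁻ x, (‖x ^ ν * f x‖₊ : ℝ≥0∞) ^ r ∂(mulHaarI l)) ^ (1/r) :=
      eLpNorm_eq_lintegral_rpow_enorm_toReal hp0 hptop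
    set Nr := ∫⁻ x, (‖x ^ ν * f x‖₊ : ℝ≥0∞) ^ r ∂(mulHaarI l) with hNrdef
    have hNr_ne : Nr ≠ ∞ := by
      intro hcon
      have h2 := hf.2
      rw [show eLpNorm (fun x => x ^ ν * f x) p (mulHaarI l) = nuNormI l ν p f from rfl,
        hRHS, hcon] at h2
      rw [ENNReal.top_rpow_of_pos (by positivity : (0:ℝ) < 1/r)] at h2
      exact (lt_irrefl _ h2).elim
    set Θ : ℝ → ℝ≥0∞ := fun x => ∫⁻ t in Ioi 1, ENNReal.ofReal (Kt t) * G (x/t) ^ r with hΘdef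
    have hΘle : ∀ x : ℝ, Φ x ^ r ≤ κ ^ (r-1) * Θ x := by
      intro x
      set θ : Measure ℝ :=
        (volume.restrict (Ioi 1)).withDensity (fun t => ENNReal.ofReal (Kt t)) with hθ
      have hwd : ∀ ψ : ℝ → ℝ≥0∞, ∫⁻ t, ψ t ∂θ = ∫⁻ t in Ioi 1, ENNReal.ofReal (Kt t) * ψ t := by
        intro ψ
        rw [hθ, lintegral_withDensity_eq_lintegral_mul_non_measurable _ hKtm.ennreal_ofReal
          (ae_of_all _ fun t => ENNReal.ofReal_lt_top)]
        rfl
      have hθuniv : θ univ = κ := by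
        have h := hwd (fun _ => 1)
        simpa using h
      have hψm : AEMeasurable (fun t => G (x / t)) θ :=
        (hGm.comp (measurable_const.div measurable_id)).aemeasurable
      calc Φ x ^ r = (∫⁻ t, G (x/t) ∂θ) ^ r := by rw [hwd]
        _ ≤ (θ univ) ^ (r-1) * ∫⁻ t, G (x/t) ^ r ∂θ := lintegral_pow_le hψm hr1
        _ = κ ^ (r-1) * Θ x := by rw [hθuniv, hwd]
    haveI hsf : SFinite mulHaar := by
      unfold mulHaar
      infer_instance
    have hswap : ∫⁻ x, Θ x ∂mulHaar
        = ∫⁻ t in Ioi 1, ∫⁻ x, ENNReal.ofReal (Kt t) * G (x/t) ^ r ∂mulHaar := by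
      refine lintegral_lintegral_swap ?_
      refine Measurable.aemeasurable ?_
      exact ((hKtm.comp measurable_snd).ennreal_ofReal).mul
        ((hGm.comp (measurable_fst.div measurable_snd)).pow measurable_const)
    have hNr_eq : ∫⁻ x, G x ^ r ∂mulHaar = Nr := by
      have h1 : ∀ x : ℝ, G x ^ r = (Ioo 0 l).indicator (fun u => (‖g₀ u‖₊ : ℝ≥0∞) ^ r) x := by
        intro x
        by_cases h : x ∈ Ioo 0 l
        · rw [hG, indicator_of_mem h, indicator_of_mem h]
        · rw [hG, indicator_of_notMem h, indicator_of_notMem h,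
            ENNReal.zero_rpow_of_pos hr0]
      simp_rw [h1]
      rw [lintegral_indicator measurableSet_Ioo,
        show ∫⁻ x in Ioo 0 l, (‖g₀ x‖₊ : ℝ≥0∞) ^ r ∂mulHaar
          = ∫⁻ x, (‖g₀ x‖₊ : ℝ≥0∞) ^ r ∂(mulHaar.restrict (Ioo 0 l)) from rfl,
        mulHaar_restrict_Ioo l]
      refine lintegral_congr_ae ?_
      filter_upwards [hgg] with x hx
      rw [hx]
    have hchain : ∫⁻ x, (‖x ^ ν * Lplus α f x‖₊ : ℝ≥0∞) ^ r ∂(mulHaarI l)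
        ≤ A ^ r * (κ ^ r * Nr) := by
      have hκr_ne : κ ^ (r-1) ≠ ∞ := ENNReal.rpow_ne_top_of_nonneg (by linarith) hκ_ne
      calc ∫⁻ x, (‖x ^ ν * Lplus α f x‖₊ : ℝ≥0∞) ^ r ∂(mulHaarI l)
          ≤ ∫⁻ x, (A * Φ x) ^ r ∂(mulHaarI l) := by
            refine lintegral_mono_ae ?_
            filter_upwards [hbound_ae] with x hx
            exact ENNReal.rpow_le_rpow hx hr0.le
        _ = A ^ r * ∫⁻ x, Φ x ^ r ∂(mulHaarI l) := by
            rw [← lintegral_const_mul' _ _ (ENNReal.rpow_ne_top_of_nonneg hr0.le hA_ne)]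
            refine lintegral_congr fun x => ?_
            rw [ENNReal.mul_rpow_of_nonneg _ _ hr0.le]
        _ ≤ A ^ r * ∫⁻ x, κ ^ (r-1) * Θ x ∂(mulHaarI l) :=
            mul_le_mul_right (lintegral_mono fun x => hΘle x) _
        _ = A ^ r * (κ ^ (r-1) * ∫⁻ x, Θ x ∂(mulHaarI l)) := by
            rw [lintegral_const_mul' _ _ hκr_ne]
        _ ≤ A ^ r * (κ ^ (r-1) * ∫⁻ x, Θ x ∂mulHaar) := by
            refine mul_le_mul_right (mul_le_mul_right ?_ _) _
            rw [← mulHaar_restrict_Ioo l]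
            exact setLIntegral_le_lintegral _ _
        _ = A ^ r * (κ ^ (r-1) * (κ * Nr)) := by
            rw [hswap]
            congr 2
            calc ∫⁻ t in Ioi 1, ∫⁻ x, ENNReal.ofReal (Kt t) * G (x/t) ^ r ∂mulHaar
                = ∫⁻ t in Ioi 1, ENNReal.ofReal (Kt t) * Nr := by
                  refine setLIntegral_congr_fun measurableSet_Ioi (fun t ht => ?_)
                  rw [lintegral_const_mul' _ _ ENNReal.ofReal_ne_top,
                    mulHaar_comp_div (lt_trans one_pos ht) (fun u => G u ^ r), hNr_eq]
              _ = κ * Nr := lintegral_mul_const' Nr _ hNr_ne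
        _ = A ^ r * (κ ^ r * Nr) := by
            congr 1
            rw [← mul_assoc]
            congr 1
            rcases eq_or_ne κ 0 with h0 | h0
            · rcases eq_or_lt_of_le hr1 with h1 | h1
              · simp [h0, ← h1]
              · rw [h0, ENNReal.zero_rpow_of_pos (by linarith), ENNReal.zero_rpow_of_pos hr0,
                  zero_mul]
            · rw [show κ ^ (r-1) * κ = κ ^ (r-1) * κ ^ (1:ℝ) by rw [ENNReal.rpow_one],
                ← ENNReal.rpow_add _ _ h0 hκ_ne]
              norm_num
    calc nuNormI l ν p (Lplus α f)
        = (∫⁻ x, (‖x ^ ν * Lplus α f x‖₊ : ℝ≥0∞) ^ r ∂(mulHaarI l)) ^ (1/r) := hLHS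
      _ ≤ (A ^ r * (κ ^ r * Nr)) ^ (1/r) := ENNReal.rpow_le_rpow hchain (by positivity)
      _ = A * (κ * Nr ^ (1/r)) := by
          rw [one_div, ENNReal.mul_rpow_of_nonneg _ _ (by positivity : (0:ℝ) ≤ r⁻¹),
            ENNReal.mul_rpow_of_nonneg _ _ (by positivity : (0:ℝ) ≤ r⁻¹),
            ENNReal.rpow_rpow_inv hr0.ne', ENNReal.rpow_rpow_inv hr0.ne']
      _ = (A * κ) * Nr ^ (1/r) := by ring
      _ = ENNReal.ofReal (((Real.Gamma (2*α))⁻¹ * ∫ u in Ioi (1:ℝ), Kt u) * l^α) *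
            nuNormI l ν p f := by rw [hCeq, hRHS]
end
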